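/- arXiv:2512.00455 — 3 statements merged into one kernel-verified Lean document; each statement's English description precedes it below -/
import Mathlib

section
/- Let T₀ < 0 and let (H, φ) solve the EdGB FLRW system on (T₀, 0] with H(0) = β > 0, φ(0) = 0 and φ'(0) < 0. Suppose that for all t ∈ (T₀, 0): H'(t) − 3·H(t)^4·exp(φ(t)) + H(t)^2 < 0, H'(t) − (12/5)·H(t)^4·exp(φ(t)) + 3·H(t)^2 > 0, and H'(t) − H(t)^2 + 3·exp(−φ(t)) > 0. Then for all t ∈ (T₀, 0): (i) H(t) < min{ (e^{6γt}·(1/β^2 − 4β/(5γ) + 2θ/(15γ^2)) − 2(−6βγ + θ + 6γθt)/(15γ^2))^{−1/2}, γ/(1 − 3β^3 t) }; (ii) H(t) > [β^{−1/4} − (β^{−1/4}/(4(m+1)))·(1 − (1 − 3β^3 t)^{m+1})]^{−4} > 0; (iii) ln((1 − 3β^3 t)^2) < φ(t) < (√6·γ/(3β^3))·ln(1 − 3β^3 t) + (2β^3/(4γ + β^3))·((1 − 3β^3 t)^{(4γ + β^3)/β^3} − 1). -/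
/-- The EdGB FLRW system on a set `I ⊆ ℝ`: `H` is continuously differentiable and
`φ` twice continuously differentiable on `I`, and for every `t ∈ I` the Hamiltonian
constraint `3H² − 3e^φ φ' H³ = φ'²/2` and the scalar field equation
`φ'' = −3Hφ' − 3e^φ H²(H² + H')` hold. -/
def EdGB (H φ : ℝ → ℝ) (I : Set ℝ) : Prop :=
  ContDiffOn ℝ 1 H I ∧ ContDiffOn ℝ 2 φ I ∧
  (∀ t ∈ I, 3 * H t ^ 2 - 3 * Real.exp (φ t) * deriv φ t * H t ^ 3 = (deriv φ t) ^ 2 / 2) ∧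
  (∀ t ∈ I, deriv (deriv φ) t =
      -3 * H t * deriv φ t - 3 * Real.exp (φ t) * H t ^ 2 * (H t ^ 2 + deriv H t))

noncomputable section

/-- `γ = (3β³ + √(9β⁶+12))/2`. -/
def gammaβ (β : ℝ) : ℝ := (3 * β ^ 3 + Real.sqrt (9 * β ^ 6 + 12)) / 2

/-- `θ = 2(9β⁶ + β³√(9β⁶+12))/(√(9β⁶+12) + 3β³)²`. -/
def thetaβ (β : ℝ) : ℝ :=
  2 * (9 * β ^ 6 + β ^ 3 * Real.sqrt (9 * β ^ 6 + 12)) /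
    (Real.sqrt (9 * β ^ 6 + 12) + 3 * β ^ 3) ^ 2

/-- `m = (107√(9β⁶+12) + 309β³)/(60β³)`. -/
def mβ (β : ℝ) : ℝ := (107 * Real.sqrt (9 * β ^ 6 + 12) + 309 * β ^ 3) / (60 * β ^ 3)

/-- The upper bound for `H` on the past evolution. -/
def Hupper (β t : ℝ) : ℝ :=
  min ((Real.exp (6 * gammaβ β * t) *
        (1 / β ^ 2 - 4 * β / (5 * gammaβ β) + 2 * thetaβ β / (15 * (gammaβ β) ^ 2)) -
      2 * (-6 * β * gammaβ β + thetaβ β + 6 * gammaβ β * thetaβ β * t) /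
        (15 * (gammaβ β) ^ 2)) ^ (-(1 / 2) : ℝ))
    (gammaβ β / (1 - 3 * β ^ 3 * t))

/-- The lower bound for `H` on the past evolution. -/
def Hlower (β t : ℝ) : ℝ :=
  (β ^ (-(1 / 4) : ℝ) -
      β ^ (-(1 / 4) : ℝ) / (4 * (mβ β + 1)) *
        (1 - (1 - 3 * β ^ 3 * t) ^ (mβ β + 1))) ^ (-4 : ℝ)

/-- The upper bound for `φ` on the past evolution. -/
def phiupper (β t : ℝ) : ℝ :=
  Real.sqrt 6 * gammaβ β / (3 * β ^ 3) * Real.log (1 - 3 * β ^ 3 * t) +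
    2 * β ^ 3 / (4 * gammaβ β + β ^ 3) *
      ((1 - 3 * β ^ 3 * t) ^ ((4 * gammaβ β + β ^ 3) / β ^ 3) - 1)

end

open Set Filter Topology

/-- If `G a ≥ 0`, `G b < 0`, and at every zero of `G` in `[a,b)` the derivative is
positive, we get a contradiction. -/
lemma first_cross {G : ℝ → ℝ} {a b : ℝ} (hab : a < b)
    (hc : ContinuousOn G (Set.Icc a b)) (ha : 0 ≤ G a) (hb : G b < 0)
    (hz : ∀ t ∈ Set.Ico a b, G t = 0 → 0 < deriv G t) : False := by
  set S : Set ℝ := Set.Icc a b ∩ G ⁻¹' (Set.Ici 0) with hS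
  have hSclosed : IsClosed S := hc.preimage_isClosed_of_isClosed isClosed_Icc isClosed_Ici
  have hSne : S.Nonempty := ⟨a, ⟨le_refl a, hab.le⟩, ha⟩
  have hSbdd : BddAbove S := ⟨b, fun x hx => hx.1.2⟩
  set c := sSup S with hc'
  have hcS : c ∈ S := hSclosed.csSup_mem hSne hSbdd
  have hcIcc : c ∈ Set.Icc a b := hcS.1
  have hGc : 0 ≤ G c := hcS.2
  have hcb : c < b := by
    rcases lt_or_eq_of_le hcIcc.2 with h | h
    · exact h
    · exact absurd (h ▸ hGc) (not_le.mpr hb)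
  have hgt : ∀ u ∈ Set.Ioc c b, G u < 0 := by
    intro u hu
    by_contra h
    push_neg at h
    have huS : u ∈ S := ⟨⟨hcIcc.1.trans hu.1.le, hu.2⟩, h⟩
    exact absurd (le_csSup hSbdd huS) (not_le.mpr hu.1)
  -- G c = 0
  have hGc0 : G c = 0 := by
    refine le_antisymm ?_ hGc
    have htend : Tendsto G (𝓝[>] c) (𝓝 (G c)) := by
      have h1 : Set.Ioc c b ∈ 𝓝[>] c := Ioc_mem_nhdsGT_of_mem ⟨le_refl c, hcb⟩
      have h2 : ContinuousWithinAt G (Set.Icc a b) c := hc c hcIcc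
      exact h2.mono_of_mem_nhdsWithin (by
        filter_upwards [h1] with u hu using ⟨hcIcc.1.trans hu.1.le, hu.2⟩ : Set.Icc a b ∈ 𝓝[>] c)
    refine le_of_tendsto htend ?_
    filter_upwards [Ioc_mem_nhdsGT_of_mem ⟨le_refl c, hcb⟩] with u hu using (hgt u hu).le
  have hdpos : 0 < deriv G c := hz c ⟨hcIcc.1, hcb⟩ hGc0
  have hdiff : DifferentiableAt ℝ G c := by
    by_contra h
    rw [deriv_zero_of_not_differentiableAt h] at hdpos
    exact lt_irrefl 0 hdpos
  have hslope : Tendsto (slope G c) (𝓝[≠] c) (𝓝 (deriv G c)) :=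
    hasDerivAt_iff_tendsto_slope.mp hdiff.hasDerivAt
  have hslope' : Tendsto (slope G c) (𝓝[>] c) (𝓝 (deriv G c)) :=
    hslope.mono_left (nhdsWithin_mono c (fun x hx => ne_of_gt hx))
  have hev : ∀ᶠ u in 𝓝[>] c, 0 < slope G c u := hslope'.eventually (eventually_gt_nhds hdpos)
  have hev2 : ∀ᶠ u in 𝓝[>] c, u ∈ Set.Ioc c b := Ioc_mem_nhdsGT_of_mem ⟨le_refl c, hcb⟩
  obtain ⟨u, hu1, hu2⟩ := (hev.and hev2).exists
  have : 0 < G u := by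
    have hs : slope G c u = (G u - G c) / (u - c) := by
      rw [slope_def_field]
    rw [hs, hGc0, sub_zero] at hu1
    have hpos : 0 < u - c := sub_pos.mpr hu2.1
    by_contra hcon
    push_neg at hcon
    have : G u / (u - c) ≤ 0 := div_nonpos_iff.mpr (Or.inr ⟨hcon, hpos.le⟩)
    linarith
  exact absurd this (not_lt.mpr (hgt u hu2).le)

/-- If `G a ≤ 0`, `G b = 0` and `deriv G < 0` wherever `G ≤ 0` on `[a,b)`,
we get a contradiction. -/
lemma trap_neg {G : ℝ → ℝ} {a b : ℝ} (hab : a < b)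
    (hc : ContinuousOn G (Set.Icc a b)) (ha : G a ≤ 0) (hb : G b = 0)
    (hneg : ∀ t ∈ Set.Ico a b, G t ≤ 0 → deriv G t < 0) : False := by
  -- Step 1: G ≤ 0 on [a,b]
  have hle : ∀ u ∈ Set.Icc a b, G u ≤ 0 := by
    intro u hu
    by_contra h
    push_neg at h
    have hua : a < u := by
      rcases lt_or_eq_of_le hu.1 with h' | h'
      · exact h'
      · exact absurd (h' ▸ ha) (not_le.mpr (h' ▸ h))
    -- apply first_cross to -G on [a,u]
    refine first_cross (G := fun x => -G x) hua ((hc.mono (Set.Icc_subset_Icc_right hu.2)).neg) ?_ ?_ ?_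
    · simpa using ha
    · simpa using h
    · intro t ht hGt
      have hGt0 : G t = 0 := by simpa [neg_eq_zero] using hGt
      have hd : deriv G t < 0 :=
        hneg t ⟨ht.1, lt_of_lt_of_le ht.2 hu.2⟩ hGt0.le
      have : deriv (fun x => -G x) t = -deriv G t := deriv.neg
      rw [this]
      linarith
  have hd' : ∀ x ∈ Set.Ioo a b, deriv G x < 0 := fun x hx =>
    hneg x ⟨hx.1.le, hx.2⟩ (hle x ⟨hx.1.le, hx.2.le⟩)
  have hanti : StrictAntiOn G (Set.Icc a b) := by
    refine strictAntiOn_of_deriv_neg (convex_Icc a b) hc ?_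
    rwa [interior_Icc]
  have := hanti ⟨le_refl a, hab.le⟩ ⟨hab.le, le_refl b⟩ hab
  rw [hb] at this
  linarith

/-- Mirror of `trap_neg`. -/
lemma trap_pos {G : ℝ → ℝ} {a b : ℝ} (hab : a < b)
    (hc : ContinuousOn G (Set.Icc a b)) (ha : 0 ≤ G a) (hb : G b = 0)
    (hpos : ∀ t ∈ Set.Ico a b, 0 ≤ G t → 0 < deriv G t) : False := by
  refine trap_neg hab (G := fun x => -G x) hc.neg (by simpa using ha) (by simpa using hb) ?_
  intro t ht hGt
  have h0 : 0 ≤ G t := by simpa [neg_nonpos] using hGt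
  have : deriv (fun x => -G x) t = -deriv G t := deriv.neg
  rw [this]
  linarith [hpos t ht h0]


section Consts
variable {β : ℝ}

lemma d_sq : Real.sqrt (9 * β ^ 6 + 12) ^ 2 = 9 * β ^ 6 + 12 :=
  Real.sq_sqrt (by positivity)

lemma d_nonneg : 0 ≤ Real.sqrt (9 * β ^ 6 + 12) := Real.sqrt_nonneg _

lemma d_gt (hβ : 0 < β) : 3 * β ^ 3 < Real.sqrt (9 * β ^ 6 + 12) := by
  nlinarith [d_sq (β := β), d_nonneg (β := β), pow_pos hβ 3]

lemma d_ge_34 (hβ : 0 < β) : (3.4 : ℝ) ≤ Real.sqrt (9 * β ^ 6 + 12) := by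
  nlinarith [d_sq (β := β), d_nonneg (β := β), pow_pos hβ 6]

lemma gamma_gt_3b3 (hβ : 0 < β) : 3 * β ^ 3 < gammaβ β := by
  have := d_gt hβ; rw [gammaβ]; linarith

lemma gamma_pos (hβ : 0 < β) : 0 < gammaβ β := lt_trans (by positivity) (gamma_gt_3b3 hβ)

lemma gamma_sq : gammaβ β ^ 2 = 3 + 3 * β ^ 3 * gammaβ β := by
  rw [gammaβ]
  have := d_sq (β := β)
  nlinarith [this]

lemma two_beta_le_gamma (hβ : 0 < β) : 2 * β ≤ gammaβ β := by
  have hd : (16:ℝ)/9 ≤ Real.sqrt (9 * β ^ 6 + 12) := by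
    nlinarith [d_sq (β := β), d_nonneg (β := β), pow_pos hβ 6]
  rw [gammaβ]
  nlinarith [mul_nonneg hβ.le (sq_nonneg (β - 2/3))]

lemma beta_lt_gamma (hβ : 0 < β) : β < gammaβ β := lt_of_lt_of_le (by linarith) (two_beta_le_gamma hβ)

lemma theta_eq (hβ : 0 < β) : thetaβ β = β ^ 3 * (gammaβ β + 3 * β ^ 3) / gammaβ β ^ 2 := by
  have h2γ : Real.sqrt (9 * β ^ 6 + 12) = 2 * gammaβ β - 3 * β ^ 3 := by
    rw [gammaβ]; ring
  have hγ : 0 < gammaβ β := gamma_pos hβ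
  rw [thetaβ, h2γ]
  have h4 : (2 * gammaβ β - 3 * β ^ 3 + 3 * β ^ 3) ^ 2 = 4 * gammaβ β ^ 2 := by ring
  rw [h4]
  field_simp
  ring

lemma theta_pos (hβ : 0 < β) : 0 < thetaβ β := by
  rw [theta_eq hβ]
  have hγ := gamma_pos hβ
  positivity

lemma theta_lt_b2 (hβ : 0 < β) : thetaβ β < β ^ 2 := by
  rw [theta_eq hβ]
  have hγ := gamma_pos hβ
  rw [div_lt_iff₀ (by positivity)]
  have hγ2 := gamma_pos hβ
  have e1 : β^2*gammaβ β*(2*β) ≤ β^2*gammaβ β*(gammaβ β) :=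
    mul_le_mul_of_nonneg_left (two_beta_le_gamma hβ) (by positivity)
  have e2 : β^3*(3*β^3) < β^3*(gammaβ β) :=
    mul_lt_mul_of_pos_left (gamma_gt_3b3 hβ) (by positivity)
  nlinarith [e1, e2]

lemma quartic_pos : 0 < 12 * gammaβ β ^ 4 - 20 * gammaβ β ^ 2 + 15 := by
  nlinarith [sq_nonneg (gammaβ β ^ 2 - 5/6)]

lemma m_pos (hβ : 0 < β) : 0 < mβ β := by
  rw [mβ]
  have := d_ge_34 (β := β) hβ
  have := pow_pos hβ 3
  positivity

lemma m_eq (hβ : 0 < β) : 3 * mβ β * β ^ 3 = (107 * Real.sqrt (9 * β ^ 6 + 12) + 309 * β ^ 3) / 20 := by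
  have h3 : β ^ 3 ≠ 0 := by positivity
  rw [mβ]
  field_simp
  ring

lemma s6_sq : Real.sqrt 6 ^ 2 = 6 := Real.sq_sqrt (by norm_num)
lemma s6_nonneg : 0 ≤ Real.sqrt 6 := Real.sqrt_nonneg _
lemma s6_le : Real.sqrt 6 ≤ 2.45 := by nlinarith [s6_sq, s6_nonneg]
lemma s6_lt_3 : Real.sqrt 6 < 3 := by nlinarith [s6_sq, s6_nonneg]

/-- The key constant inequality for the lower bound on `H`. -/
lemma key_m_ineq (hβ : 0 < β) : (Real.sqrt 6 + 33/4 - (3/5) * β ^ 2) * gammaβ β ≤ 3 * mβ β * β ^ 3 := by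
  have hs2 := s6_sq
  have hs0 := s6_nonneg
  have hsle := s6_le
  have hd2 := d_sq (β := β)
  have hd0 := d_nonneg (β := β)
  have hd34 := d_ge_34 hβ
  have hdg := d_gt hβ
  rw [m_eq hβ, gammaβ]
  set s := Real.sqrt 6
  set d := Real.sqrt (9 * β ^ 6 + 12)
  have key : (30 * s - 61.5 - 18 * β ^ 2) * β ^ 3 ≤ (24.5 - 10 * s + 6 * β ^ 2) * d := by
    rcases le_or_gt (30 * s) (61.5 + 18 * β ^ 2) with hA | hB
    · have h1 : (30 * s - 61.5 - 18 * β ^ 2) * β ^ 3 ≤ 0 :=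
        mul_nonpos_of_nonpos_of_nonneg (by linarith) (by positivity)
      have h2 : (0:ℝ) ≤ (24.5 - 10 * s + 6 * β ^ 2) * d :=
        mul_nonneg (by nlinarith) hd0
      linarith
    · have hb2 : β ^ 2 ≤ 2/3 := by nlinarith
      have hble : β ≤ 0.82 := by nlinarith
      have hA1 : (30 * s - 61.5 - 18 * β ^ 2) * β ^ 3 ≤ 12 * β ^ 3 := by
        nlinarith [pow_pos hβ 3]
      have hA2 : 12 * β ^ 3 ≤ 9.84 * β ^ 2 := by nlinarith [sq_nonneg β]
      have hA3 : (20.4:ℝ) * β ^ 2 ≤ (24.5 - 10 * s + 6 * β ^ 2) * d := by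
        have e1 : (0:ℝ) ≤ (24.5 - 10 * s) * d := mul_nonneg (by nlinarith) hd0
        have e2 : (6:ℝ) * β ^ 2 * 3.4 ≤ 6 * β ^ 2 * d :=
          mul_le_mul_of_nonneg_left hd34 (by positivity)
        nlinarith
      have hA25 : (9.84:ℝ) * β ^ 2 ≤ 20.4 * β ^ 2 := by nlinarith [sq_nonneg β]
      linarith
  nlinarith [key]
end Consts



set_option maxHeartbeats 4000000 in
/-- Past-evolution bounds: if `(H, φ)` solves the EdGB FLRW system on `(T₀, 0]`
with `H(0) = β > 0`, `φ(0) = 0`, `φ'(0) < 0`, and the three sign conditions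
`D₃ < 0`, `D₄ > 0`, `D₅ > 0` hold on `(T₀, 0)`, then for all `t ∈ (T₀, 0)`:
`Hlower β t < H t < Hupper β t`, `0 < Hlower β t`, and
`ln((1 − 3β³t)²) < φ(t) < phiupper β t`. -/
theorem stmt_14 (T₀ β : ℝ) (hT₀ : T₀ < 0) (H φ : ℝ → ℝ)
    (hsys : EdGB H φ (Set.Ioc T₀ 0))
    (h0 : H 0 = β) (hβ : 0 < β) (hφ0 : φ 0 = 0) (hφ'0 : deriv φ 0 < 0)
    (hD3 : ∀ t ∈ Set.Ioo T₀ 0,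
      deriv H t - 3 * H t ^ 4 * Real.exp (φ t) + H t ^ 2 < 0)
    (hD4 : ∀ t ∈ Set.Ioo T₀ 0,
      deriv H t - (12 / 5) * H t ^ 4 * Real.exp (φ t) + 3 * H t ^ 2 > 0)
    (hD5 : ∀ t ∈ Set.Ioo T₀ 0,
      deriv H t - H t ^ 2 + 3 * Real.exp (-φ t) > 0) :
    ∀ t ∈ Set.Ioo T₀ 0,
      H t < Hupper β t ∧
      (H t > Hlower β t ∧ Hlower β t > 0) ∧
      (Real.log ((1 - 3 * β ^ 3 * t) ^ 2) < φ t ∧ φ t < phiupper β t) := by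
  obtain ⟨hH1, hφ2, hcon, _hsf⟩ := hsys
  have hsub : Set.Ioo T₀ 0 ⊆ Set.Ioc T₀ 0 := Set.Ioo_subset_Ioc_self
  have hmemI : ∀ {t : ℝ}, t ∈ Set.Ioo T₀ 0 → Set.Ioc T₀ 0 ∈ 𝓝 t :=
    fun ht => mem_nhds_iff.mpr ⟨Set.Ioo T₀ 0, hsub, isOpen_Ioo, ht⟩
  have hHd : ∀ t ∈ Set.Ioo T₀ 0, HasDerivAt H (deriv H t) t :=
    fun t ht => ((hH1.contDiffAt (hmemI ht)).differentiableAt one_ne_zero).hasDerivAt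
  have hφd : ∀ t ∈ Set.Ioo T₀ 0, HasDerivAt φ (deriv φ t) t :=
    fun t ht => ((hφ2.contDiffAt (hmemI ht)).differentiableAt (by norm_num)).hasDerivAt
  have hHc : ContinuousOn H (Set.Ioc T₀ 0) := hH1.continuousOn
  have hφc : ContinuousOn φ (Set.Ioc T₀ 0) := hφ2.continuousOn
  have hIccsub : ∀ {t : ℝ}, t ∈ Set.Ioo T₀ 0 → Set.Icc t 0 ⊆ Set.Ioc T₀ 0 :=
    fun ht u hu => ⟨lt_of_lt_of_le ht.1 hu.1, hu.2⟩
  have h0I : (0:ℝ) ∈ Set.Ioc T₀ 0 := ⟨hT₀, le_rfl⟩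
  -- F1 : H > 0
  have hHpos : ∀ t ∈ Set.Ioc T₀ 0, 0 < H t := by
    intro t₁ ht₁
    rcases eq_or_lt_of_le ht₁.2 with h | h
    · rw [h, h0]; exact hβ
    · by_contra hnot
      push_neg at hnot
      have ht₁O : t₁ ∈ Set.Ioo T₀ 0 := ⟨ht₁.1, h⟩
      refine first_cross (G := fun u => -H u) h ((hHc.mono (hIccsub ht₁O)).neg)
        (by simpa using hnot) (by show -H 0 < 0; rw [h0]; linarith) ?_
      intro u hu hzero
      have huO : u ∈ Set.Ioo T₀ 0 := ⟨lt_of_lt_of_le ht₁.1 hu.1, hu.2⟩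
      have hHu : H u = 0 := by simpa [neg_eq_zero] using hzero
      have hd3 := hD3 u huO
      rw [hHu] at hd3
      rw [show deriv (fun u => -H u) u = -deriv H u from deriv.neg]
      norm_num at hd3 ⊢
      exact hd3
  -- derivWithin facts
  have hUD : UniqueDiffOn ℝ (Set.Ioc T₀ 0) := uniqueDiffOn_Ioc T₀ 0
  have hψWc : ContinuousOn (derivWithin φ (Set.Ioc T₀ 0)) (Set.Ioc T₀ 0) :=
    hφ2.continuousOn_derivWithin hUD (by norm_num)
  have hψWeq : ∀ t ∈ Set.Ioo T₀ 0, derivWithin φ (Set.Ioc T₀ 0) t = deriv φ t :=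
    fun t ht => derivWithin_of_mem_nhds (hmemI ht)
  have hψW0 : derivWithin φ (Set.Ioc T₀ 0) 0 = deriv φ 0 := by
    have hdiff0 : DifferentiableAt ℝ φ 0 := by
      by_contra hcon'
      rw [deriv_zero_of_not_differentiableAt hcon'] at hφ'0
      exact lt_irrefl 0 hφ'0
    exact hdiff0.derivWithin (hUD 0 h0I)
  -- F2 : deriv φ < 0 on Ioo
  have hψneg : ∀ t ∈ Set.Ioo T₀ 0, deriv φ t < 0 := by
    intro t₁ ht₁
    by_contra hnot
    push_neg at hnot
    have hcontW : ContinuousOn (derivWithin φ (Set.Ioc T₀ 0)) (Set.Icc t₁ 0) :=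
      hψWc.mono (hIccsub ht₁)
    have hmem : (0:ℝ) ∈ Set.Icc (derivWithin φ (Set.Ioc T₀ 0) 0)
        (derivWithin φ (Set.Ioc T₀ 0) t₁) :=
      ⟨by rw [hψW0]; exact hφ'0.le, by rw [hψWeq t₁ ht₁]; exact hnot⟩
    obtain ⟨c, hcmem, hc0⟩ := intermediate_value_Icc' ht₁.2.le hcontW hmem
    rcases eq_or_lt_of_le hcmem.2 with hc | hc
    · rw [hc, hψW0] at hc0
      exact absurd hc0 (ne_of_lt hφ'0)
    · have hcO : c ∈ Set.Ioo T₀ 0 := ⟨lt_of_lt_of_le ht₁.1 hcmem.1, hc⟩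
      rw [hψWeq c hcO] at hc0
      have hconc := hcon c (hsub hcO)
      rw [hc0] at hconc
      have := hHpos c (hsub hcO)
      nlinarith [hconc, this]
  -- constraint quadratic
  have hquad : ∀ t ∈ Set.Ioo T₀ 0,
      deriv φ t ^ 2 + 6 * (Real.exp (φ t) * H t ^ 3) * deriv φ t - 6 * H t ^ 2 = 0 := by
    intro t ht
    have := hcon t (hsub ht)
    linear_combination (-2 : ℝ) * this
  have hApos : ∀ t ∈ Set.Ioo T₀ 0, 0 < Real.exp (φ t) * H t ^ 3 := by
    intro t ht
    have := hHpos t (hsub ht)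
    positivity
  -- ψ < -6A
  have hψlt : ∀ t ∈ Set.Ioo T₀ 0, deriv φ t < -(6 * (Real.exp (φ t) * H t ^ 3)) := by
    intro t ht
    have hq := hquad t ht
    have hψ := hψneg t ht
    have hA := hApos t ht
    have hH := hHpos t (hsub ht)
    nlinarith [hq, hψ, hA, pow_pos hH 2]
  -- ψ < -√6 H
  have hψltsH : ∀ t ∈ Set.Ioo T₀ 0, deriv φ t < -(Real.sqrt 6 * H t) := by
    intro t ht
    have hq := hquad t ht
    have hψ := hψneg t ht
    have hA := hApos t ht
    have hH := hHpos t (hsub ht)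
    nlinarith [hq, hψ, hA, hH, s6_sq, s6_nonneg, mul_pos hA (neg_pos.mpr hψ)]
  -- ψ ≥ -6A - √6 H
  have hψge : ∀ t ∈ Set.Ioo T₀ 0,
      -(6 * (Real.exp (φ t) * H t ^ 3)) - Real.sqrt 6 * H t ≤ deriv φ t := by
    intro t ht
    have hq := hquad t ht
    have hψ := hψneg t ht
    have hA := hApos t ht
    have hH := hHpos t (hsub ht)
    by_contra hcon'
    push_neg at hcon'
    have hs : 0 < Real.sqrt 6 := Real.sqrt_pos.mpr (by norm_num)
    have hu : 0 < -(deriv φ t) := by nlinarith [mul_pos hs hH]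
    have k1 : 0 < (-(deriv φ t) - 6 * (Real.exp (φ t) * H t ^ 3) - Real.sqrt 6 * H t) *
        (-(deriv φ t)) := mul_pos (by linarith) hu
    have k2 : Real.sqrt 6 * H t * (6 * (Real.exp (φ t) * H t ^ 3) + Real.sqrt 6 * H t) <
        Real.sqrt 6 * H t * (-(deriv φ t)) :=
      mul_lt_mul_of_pos_left (by linarith) (mul_pos hs hH)
    have k3 : Real.sqrt 6 ^ 2 * H t ^ 2 = 6 * H t ^ 2 := by rw [s6_sq]
    have k4 : 0 < Real.sqrt 6 * (Real.exp (φ t) * H t ^ 3) * H t :=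
      mul_pos (mul_pos hs hA) hH
    nlinarith [hq, k1, k2, k3, k4]
  -- F3 : P = e^φ H² > β²
  have hP : ∀ t ∈ Set.Ioo T₀ 0, β ^ 2 < Real.exp (φ t) * H t ^ 2 := by
    intro t ht
    have hanti : StrictAntiOn (fun u => Real.exp (φ u) * H u ^ 2) (Set.Icc t 0) := by
      refine strictAntiOn_of_deriv_neg (convex_Icc t 0)
        ((Real.continuous_exp.comp_continuousOn (hφc.mono (hIccsub ht))).mul
          ((hHc.mono (hIccsub ht)).pow 2)) ?_
      rw [interior_Icc]
      intro u hu
      have huO : u ∈ Set.Ioo T₀ 0 := ⟨lt_trans ht.1 hu.1, hu.2⟩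
      have hdP : HasDerivAt (fun u => Real.exp (φ u) * H u ^ 2)
          (Real.exp (φ u) * deriv φ u * H u ^ 2 +
            Real.exp (φ u) * ((2:ℕ) * H u ^ (2-1) * deriv H u)) u :=
        ((hφd u huO).exp).mul ((hHd u huO).pow 2)
      rw [hdP.deriv]
      have h1 := hψlt u huO
      have h2 := hD3 u huO
      have hH := hHpos u (hsub huO)
      have hE := Real.exp_pos (φ u)
      have e1 : Real.exp (φ u) * H u ^ 2 * deriv φ u <
          Real.exp (φ u) * H u ^ 2 * (-(6 * (Real.exp (φ u) * H u ^ 3))) :=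
        mul_lt_mul_of_pos_left h1 (by positivity)
      have h2' : deriv H u < 3 * H u ^ 4 * Real.exp (φ u) - H u ^ 2 := by linarith
      have e2 : 2 * Real.exp (φ u) * H u * deriv H u <
          2 * Real.exp (φ u) * H u * (3 * H u ^ 4 * Real.exp (φ u) - H u ^ 2) :=
        mul_lt_mul_of_pos_left h2' (by positivity)
      have e3 : 0 < Real.exp (φ u) * H u ^ 3 := by positivity
      push_cast
      nlinarith [e1, e2, e3]
    have := hanti (Set.left_mem_Icc.mpr ht.2.le) (Set.right_mem_Icc.mpr ht.2.le) ht.2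
    simp only [] at this
    rw [hφ0, h0, Real.exp_zero, one_mul] at this
    exact this
  -- F4 : r = e^φ H > β - θ t
  have hr : ∀ t ∈ Set.Ioo T₀ 0, β - thetaβ β * t < Real.exp (φ t) * H t := by
    intro t ht
    have hanti : StrictAntiOn (fun u => Real.exp (φ u) * H u - (β - thetaβ β * u))
        (Set.Icc t 0) := by
      refine strictAntiOn_of_deriv_neg (convex_Icc t 0) ?_ ?_
      · exact ((Real.continuous_exp.comp_continuousOn (hφc.mono (hIccsub ht))).mul
          (hHc.mono (hIccsub ht))).sub (continuousOn_const.sub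
            (continuousOn_const.mul continuousOn_id))
      rw [interior_Icc]
      intro u hu
      have huO : u ∈ Set.Ioo T₀ 0 := ⟨lt_trans ht.1 hu.1, hu.2⟩
      have hlin : HasDerivAt (fun u : ℝ => β - thetaβ β * u) (-(thetaβ β)) u := by
        simpa using ((hasDerivAt_id u).const_mul (thetaβ β)).const_sub β
      have hdW : HasDerivAt (fun u => Real.exp (φ u) * H u - (β - thetaβ β * u))
          (Real.exp (φ u) * deriv φ u * H u + Real.exp (φ u) * deriv H u - -(thetaβ β)) u :=
        (((hφd u huO).exp).mul (hHd u huO)).sub hlin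
      rw [hdW.deriv]
      have h1 := hψlt u huO
      have h2 := hD3 u huO
      have hH := hHpos u (hsub huO)
      have hE := Real.exp_pos (φ u)
      have hPu := hP u huO
      have hθ := theta_lt_b2 hβ
      have e1 : Real.exp (φ u) * H u * deriv φ u <
          Real.exp (φ u) * H u * (-(6 * (Real.exp (φ u) * H u ^ 3))) :=
        mul_lt_mul_of_pos_left h1 (by positivity)
      have h2' : deriv H u < 3 * H u ^ 4 * Real.exp (φ u) - H u ^ 2 := by linarith
      have e2 : Real.exp (φ u) * deriv H u <
          Real.exp (φ u) * (3 * H u ^ 4 * Real.exp (φ u) - H u ^ 2) :=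
        mul_lt_mul_of_pos_left h2' hE
      -- e^φ ψ H + e^φ H' + θ < -3P² - P + θ < 0
      nlinarith [e1, e2, hPu, hθ, sq_nonneg (Real.exp (φ u) * H u ^ 2), hβ,
        mul_pos hE (pow_pos hH 2), sq_nonneg β]
    have := hanti (Set.left_mem_Icc.mpr ht.2.le) (Set.right_mem_Icc.mpr ht.2.le) ht.2
    simp only [] at this
    rw [hφ0, h0, Real.exp_zero, one_mul] at this
    simp only [mul_zero, sub_zero, sub_self] at this
    linarith
  -- x positivity helpers
  have hb3 : (0:ℝ) < β ^ 3 := pow_pos hβ 3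
  have hxpos : ∀ u : ℝ, u ≤ 0 → (0:ℝ) < 1 - 3 * β ^ 3 * u := by
    intro u hu
    nlinarith [mul_nonpos_of_nonneg_of_nonpos (le_of_lt (by positivity : (0:ℝ) < 3 * β ^ 3)) hu]
  have hxd : ∀ u : ℝ, HasDerivAt (fun v : ℝ => 1 - 3 * β ^ 3 * v) (-(3 * β ^ 3)) u := by
    intro u
    simpa using ((hasDerivAt_id u).const_mul (3 * β ^ 3)).const_sub 1
  have hxcont : ContinuousOn (fun v : ℝ => 1 - 3 * β ^ 3 * v) (Set.Icc T₀ 0) :=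
    (continuous_const.sub (continuous_const.mul continuous_id)).continuousOn
  -- F5 : φ > 2 log x
  have hφlow : ∀ t ∈ Set.Ioo T₀ 0, 2 * Real.log (1 - 3 * β ^ 3 * t) < φ t := by
    intro t₁ ht₁
    by_contra hnot
    push_neg at hnot
    refine trap_pos (G := fun u => 2 * Real.log (1 - 3 * β ^ 3 * u) - φ u) ht₁.2 ?_
      (show (0:ℝ) ≤ 2 * Real.log (1 - 3 * β ^ 3 * t₁) - φ t₁ by linarith)
      (by simp [hφ0]) ?_
    · refine ContinuousOn.sub ?_ (hφc.mono (hIccsub ht₁))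
      refine ContinuousOn.mul continuousOn_const ?_
      refine ContinuousOn.log ?_ ?_
      · exact (continuous_const.sub (continuous_const.mul continuous_id)).continuousOn
      · intro u hu
        exact ne_of_gt (hxpos u hu.2)
    · intro u hu hGu
      have hGu' : (0:ℝ) ≤ 2 * Real.log (1 - 3 * β ^ 3 * u) - φ u := hGu
      have huO : u ∈ Set.Ioo T₀ 0 := ⟨lt_of_lt_of_le ht₁.1 hu.1, hu.2⟩
      have hx : (0:ℝ) < 1 - 3 * β ^ 3 * u := hxpos u hu.2.le
      have hdG : HasDerivAt (fun u => 2 * Real.log (1 - 3 * β ^ 3 * u) - φ u)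
          (2 * (-(3 * β ^ 3) / (1 - 3 * β ^ 3 * u)) - deriv φ u) u :=
        (((hxd u).log (ne_of_gt hx)).const_mul 2).sub (hφd u huO)
      rw [hdG.deriv]
      -- from G u ≥ 0 : exp (φ u) ≤ x²
      have hE : Real.exp (φ u) ≤ (1 - 3 * β ^ 3 * u) ^ 2 := by
        have h1 : φ u ≤ 2 * Real.log (1 - 3 * β ^ 3 * u) := by linarith [hGu']
        calc Real.exp (φ u) ≤ Real.exp (2 * Real.log (1 - 3 * β ^ 3 * u)) :=
              Real.exp_le_exp.mpr h1
          _ = (1 - 3 * β ^ 3 * u) ^ 2 := by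
              rw [two_mul, Real.exp_add, Real.exp_log hx]; ring
      have hPu := hP u huO
      have hH := hHpos u (hsub huO)
      have hEp := Real.exp_pos (φ u)
      -- x H > β
      have hxH : β < (1 - 3 * β ^ 3 * u) * H u := by
        nlinarith [mul_le_mul_of_nonneg_left hE (pow_pos hH 2).le, hβ, hPu,
          mul_pos hx hH]
      -- x * A > β³
      have hxA : β ^ 3 < (1 - 3 * β ^ 3 * u) * (Real.exp (φ u) * H u ^ 3) := by
        have k1 : β * β ^ 2 < β * (Real.exp (φ u) * H u ^ 2) := by
          exact mul_lt_mul_of_pos_left hPu hβ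
        have k2 : Real.exp (φ u) * H u ^ 2 * β <
            Real.exp (φ u) * H u ^ 2 * ((1 - 3 * β ^ 3 * u) * H u) :=
          mul_lt_mul_of_pos_left hxH (by positivity)
        nlinarith [k1, k2]
      have h6 : 6 * β ^ 3 / (1 - 3 * β ^ 3 * u) < 6 * (Real.exp (φ u) * H u ^ 3) := by
        rw [div_lt_iff₀ hx]
        nlinarith [hxA]
      have hψu := hψlt u huO
      have : 2 * (-(3 * β ^ 3) / (1 - 3 * β ^ 3 * u)) = -(6 * β ^ 3 / (1 - 3 * β ^ 3 * u)) := by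
        ring
      rw [this]
      linarith
  -- F6 : H < γ / x
  have hHup2 : ∀ t ∈ Set.Ioo T₀ 0, H t < gammaβ β / (1 - 3 * β ^ 3 * t) := by
    intro t₁ ht₁
    by_contra hnot
    push_neg at hnot
    have hx₁ : (0:ℝ) < 1 - 3 * β ^ 3 * t₁ := hxpos t₁ ht₁.2.le
    refine first_cross (G := fun u => H u - gammaβ β * (1 - 3 * β ^ 3 * u)⁻¹) ht₁.2 ?_ ?_ ?_ ?_
    · refine ContinuousOn.sub (hHc.mono (hIccsub ht₁)) ?_
      refine ContinuousOn.mul continuousOn_const ?_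
      refine ContinuousOn.inv₀ ?_ ?_
      · exact (continuous_const.sub (continuous_const.mul continuous_id)).continuousOn
      · intro u hu
        exact ne_of_gt (hxpos u hu.2)
    · have : gammaβ β / (1 - 3 * β ^ 3 * t₁) = gammaβ β * (1 - 3 * β ^ 3 * t₁)⁻¹ :=
        div_eq_mul_inv _ _
      rw [← this]
      linarith
    · show H 0 - gammaβ β * (1 - 3 * β ^ 3 * 0)⁻¹ < 0
      rw [h0]
      norm_num
      exact beta_lt_gamma hβ
    · intro u hu hzero
      have huO : u ∈ Set.Ioo T₀ 0 := ⟨lt_of_lt_of_le ht₁.1 hu.1, hu.2⟩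
      have hx : (0:ℝ) < 1 - 3 * β ^ 3 * u := hxpos u hu.2.le
      have hdG : HasDerivAt (fun u => H u - gammaβ β * (1 - 3 * β ^ 3 * u)⁻¹)
          (deriv H u - gammaβ β * (-(-(3 * β ^ 3)) / (1 - 3 * β ^ 3 * u) ^ 2)) u :=
        (hHd u huO).sub (((hxd u).inv (ne_of_gt hx)).const_mul (gammaβ β))
      rw [hdG.deriv]
      have hHu : H u = gammaβ β * (1 - 3 * β ^ 3 * u)⁻¹ := by
        have := sub_eq_zero.mp hzero
        exact this
      have hxH : (1 - 3 * β ^ 3 * u) * H u = gammaβ β := by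
        rw [hHu]
        field_simp
      have hE : (1 - 3 * β ^ 3 * u) ^ 2 < Real.exp (φ u) := by
        have h1 := hφlow u huO
        calc (1 - 3 * β ^ 3 * u) ^ 2 = Real.exp (2 * Real.log (1 - 3 * β ^ 3 * u)) := by
              rw [two_mul, Real.exp_add, Real.exp_log hx]; ring
          _ < Real.exp (φ u) := Real.exp_lt_exp.mpr h1
      have hd4 := hD4 u huO
      have hH := hHpos u (hsub huO)
      have hγp := gamma_pos hβ
      have hγsq := gamma_sq (β := β)
      have hquartic := quartic_pos (β := β)
      -- reduce to 3β³γ < deriv H u * x²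
      have hgoal2 : 3 * β ^ 3 * gammaβ β < deriv H u * (1 - 3 * β ^ 3 * u) ^ 2 := by
        have hDx : (12 / 5 * H u ^ 4 * Real.exp (φ u) - 3 * H u ^ 2) * (1 - 3 * β ^ 3 * u) ^ 2 <
            deriv H u * (1 - 3 * β ^ 3 * u) ^ 2 :=
          mul_lt_mul_of_pos_right (by linarith) (by positivity)
        have hsq : H u ^ 2 * (1 - 3 * β ^ 3 * u) ^ 2 = gammaβ β ^ 2 := by
          linear_combination ((1 - 3 * β ^ 3 * u) * H u + gammaβ β) * hxH
        have h5 : H u ^ 4 * Real.exp (φ u) * (1 - 3 * β ^ 3 * u) ^ 2 =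
            gammaβ β ^ 2 * (H u ^ 2 * Real.exp (φ u)) := by
          linear_combination (H u ^ 2 * Real.exp (φ u)) * hsq
        have e1 : gammaβ β ^ 2 < H u ^ 2 * Real.exp (φ u) := by
          nlinarith [mul_lt_mul_of_pos_left hE (pow_pos hH 2), hsq]
        have e2 : (12 / 5) * gammaβ β ^ 2 * gammaβ β ^ 2 <
            (12 / 5) * gammaβ β ^ 2 * (H u ^ 2 * Real.exp (φ u)) :=
          mul_lt_mul_of_pos_left e1 (by positivity)
        nlinarith [hDx, h5, hsq, e2, hquartic, hγsq]
      have hrw : gammaβ β * (-(-(3 * β ^ 3)) / (1 - 3 * β ^ 3 * u) ^ 2) =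
          3 * β ^ 3 * gammaβ β / (1 - 3 * β ^ 3 * u) ^ 2 := by ring
      rw [hrw]
      rw [sub_pos]
      rw [div_lt_iff₀ (by positivity)]
      exact hgoal2
  -- x ≥ 1 for u ≤ 0 and H < γ on O
  have hx1 : ∀ u : ℝ, u ≤ 0 → (1:ℝ) ≤ 1 - 3 * β ^ 3 * u := by
    intro u hu
    nlinarith [mul_nonpos_of_nonneg_of_nonpos (le_of_lt (by positivity : (0:ℝ) < 3 * β ^ 3)) hu]
  have hγp := gamma_pos hβ
  have hθp := theta_pos hβ
  have hθb := theta_lt_b2 hβ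
  have hβγ := beta_lt_gamma hβ
  have hHltγ : ∀ t ∈ Set.Ioo T₀ 0, H t < gammaβ β := fun t ht =>
    lt_of_lt_of_le (hHup2 t ht) (div_le_self hγp.le (hx1 t ht.2.le))
  have hHxγ : ∀ t ∈ Set.Ioo T₀ 0, H t * (1 - 3 * β ^ 3 * t) < gammaβ β := by
    intro t ht
    have hx := hxpos t ht.2.le
    have := (lt_div_iff₀ hx).mp (hHup2 t ht)
    linarith
  -- F9 : the exponential upper bound
  have hCpos : 0 < 1 / β ^ 2 - 4 * β / (5 * gammaβ β) + 2 * thetaβ β / (15 * gammaβ β ^ 2) := by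
    have h1 : 4 * β / (5 * gammaβ β) < 1 / β ^ 2 := by
      rw [div_lt_div_iff₀ (by positivity) (by positivity)]
      nlinarith [gamma_gt_3b3 hβ, hb3]
    have h2 : 0 < 2 * thetaβ β / (15 * gammaβ β ^ 2) := by positivity
    linarith
  set Uf : ℝ → ℝ := fun u => Real.exp (6 * gammaβ β * u) *
      (1 / β ^ 2 - 4 * β / (5 * gammaβ β) + 2 * thetaβ β / (15 * gammaβ β ^ 2)) -
      2 * (-6 * β * gammaβ β + thetaβ β + 6 * gammaβ β * thetaβ β * u) /
        (15 * gammaβ β ^ 2) with hUdef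
  have hU0 : Uf 0 = 1 / β ^ 2 := by
    rw [hUdef]
    simp only [mul_zero, Real.exp_zero, one_mul, add_zero]
    field_simp
    ring
  have hUpos : ∀ u : ℝ, u ≤ 0 → 0 < Uf u := by
    intro u hu
    rw [hUdef]
    simp only []
    have he : (0:ℝ) < Real.exp (6 * gammaβ β * u) := Real.exp_pos _
    have t1 : 0 < Real.exp (6 * gammaβ β * u) *
        (1 / β ^ 2 - 4 * β / (5 * gammaβ β) + 2 * thetaβ β / (15 * gammaβ β ^ 2)) :=
      mul_pos he hCpos
    have hθ6 : thetaβ β < 6 * β * gammaβ β := by nlinarith [hθb, hβγ, hβ]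
    have hγθu : 6 * gammaβ β * thetaβ β * u ≤ 0 :=
      mul_nonpos_of_nonneg_of_nonpos (by positivity) hu
    have t2 : 2 * (-6 * β * gammaβ β + thetaβ β + 6 * gammaβ β * thetaβ β * u) /
        (15 * gammaβ β ^ 2) ≤ 0 :=
      div_nonpos_of_nonpos_of_nonneg (by nlinarith) (by positivity)
    linarith
  have hU' : ∀ u : ℝ, HasDerivAt Uf
      (6 * gammaβ β * Uf u - (24 / 5) * (β - thetaβ β * u)) u := by
    intro u
    have h1 : HasDerivAt (fun v : ℝ => Real.exp (6 * gammaβ β * v))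
        (Real.exp (6 * gammaβ β * u) * (6 * gammaβ β)) u := by
      simpa using (((hasDerivAt_id u).const_mul (6 * gammaβ β)).exp)
    have h2 : HasDerivAt (fun v : ℝ => 2 * (-6 * β * gammaβ β + thetaβ β +
          6 * gammaβ β * thetaβ β * v) / (15 * gammaβ β ^ 2))
        (2 * (6 * gammaβ β * thetaβ β) / (15 * gammaβ β ^ 2)) u := by
      have hinner : HasDerivAt (fun v : ℝ => -6 * β * gammaβ β + thetaβ β +
          6 * gammaβ β * thetaβ β * v) (6 * gammaβ β * thetaβ β) u := by
        simpa using ((hasDerivAt_id u).const_mul (6 * gammaβ β * thetaβ β)).const_add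
          (-6 * β * gammaβ β + thetaβ β)
      exact (hinner.const_mul 2).div_const _
    have := (h1.mul_const (1 / β ^ 2 - 4 * β / (5 * gammaβ β) +
        2 * thetaβ β / (15 * gammaβ β ^ 2))).sub h2
    refine this.congr_deriv ?_
    rw [hUdef]
    simp only []
    field_simp
    ring
  have hUcont : Continuous Uf := by
    rw [hUdef]
    fun_prop
  have hu_gt : ∀ t ∈ Set.Ioo T₀ 0, Uf t < (H t ^ 2)⁻¹ := by
    intro t₁ ht₁
    by_contra hnot
    push_neg at hnot
    refine trap_neg (G := fun u => (H u ^ 2)⁻¹ - Uf u) ht₁.2 ?_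
      (show (H t₁ ^ 2)⁻¹ - Uf t₁ ≤ 0 by linarith) ?_ ?_
    · refine ContinuousOn.sub ?_ (hUcont.continuousOn)
      refine ContinuousOn.inv₀ ((hHc.mono (hIccsub ht₁)).pow 2) ?_
      intro u hu
      exact ne_of_gt (pow_pos (hHpos u (hIccsub ht₁ hu)) 2)
    · show (H 0 ^ 2)⁻¹ - Uf 0 = 0
      rw [h0, hU0]
      field_simp
      ring
    · intro u hu hGu
      have hGu' : (H u ^ 2)⁻¹ - Uf u ≤ 0 := hGu
      have huO : u ∈ Set.Ioo T₀ 0 := ⟨lt_of_lt_of_le ht₁.1 hu.1, hu.2⟩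
      have hH := hHpos u (hsub huO)
      have hEp := Real.exp_pos (φ u)
      have hinv : HasDerivAt (fun v => (H v ^ 2)⁻¹)
          (-((2:ℕ) * H u ^ (2-1) * deriv H u) / (H u ^ 2) ^ 2) u :=
        ((hHd u huO).pow 2).inv (pow_pos hH 2).ne'
      have hdG := hinv.sub (hU' u)
      simp only [Pi.sub_def] at hdG
      rw [hdG.deriv]
      have hd4 := hD4 u huO
      have hru := hr u huO
      have hHγ := hHltγ u huO
      have hUu : 0 < Uf u := hUpos u hu.2.le
      have c1 : -((2:ℕ) * H u ^ (2-1) * deriv H u) / (H u ^ 2) ^ 2 =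
          -2 * deriv H u / H u ^ 3 := by
        push_cast
        field_simp
      have c2 : -2 * deriv H u / H u ^ 3 <
          -(24/5) * (H u * Real.exp (φ u)) + 6 / H u := by
        rw [div_lt_iff₀ (pow_pos hH 3)]
        have : (-(24/5) * (H u * Real.exp (φ u)) + 6 / H u) * H u ^ 3 =
            -(24/5) * (H u ^ 4 * Real.exp (φ u)) + 6 * (H u ^ 3 / H u) := by ring
        rw [this]
        have h6 : H u ^ 3 / H u = H u ^ 2 := by
          field_simp
        rw [h6]
        nlinarith [hd4]
      have c3 : 6 / H u < 6 * (gammaβ β * Uf u) := by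
        have k1 : H u * (H u ^ 2)⁻¹ ≤ H u * Uf u := by
          have : (H u ^ 2)⁻¹ ≤ Uf u := by linarith
          exact mul_le_mul_of_nonneg_left this hH.le
        have k2 : H u * Uf u < gammaβ β * Uf u := mul_lt_mul_of_pos_right hHγ hUu
        have k3 : 1 / H u = H u * (H u ^ 2)⁻¹ := by
          field_simp
        have hk : 1 / H u < gammaβ β * Uf u := by
          rw [k3]; exact lt_of_le_of_lt k1 k2
        have h66 : 6 / H u = 6 * (1 / H u) := by ring
        rw [h66]
        exact mul_lt_mul_of_pos_left hk (by norm_num)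
      have c4 : -(24/5) * (H u * Real.exp (φ u)) < -(24/5) * (β - thetaβ β * u) := by
        nlinarith [hru]
      rw [c1]
      linarith
  -- F7 : e^φ H^{11/4} < β^{11/4} x^m
  have hmp := m_pos hβ
  have hs0 := s6_nonneg
  have hRbound : ∀ t ∈ Set.Ioo T₀ 0,
      Real.exp (φ t) * H t ^ ((11:ℝ)/4) <
        β ^ ((11:ℝ)/4) * (1 - 3 * β ^ 3 * t) ^ (mβ β) := by
    intro t ht
    have hxt := hxpos t ht.2.le
    have hmono : StrictMonoOn (fun u => Real.exp (φ u) * H u ^ ((11:ℝ)/4) *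
        (1 - 3 * β ^ 3 * u) ^ (-(mβ β))) (Set.Icc t 0) := by
      refine strictMonoOn_of_deriv_pos (convex_Icc t 0) ?_ ?_
      · refine ContinuousOn.mul ?_ ?_
        · refine ContinuousOn.mul
            (Real.continuous_exp.comp_continuousOn (hφc.mono (hIccsub ht))) ?_
          refine ContinuousOn.rpow_const (hHc.mono (hIccsub ht)) ?_
          intro u hu
          exact Or.inl (ne_of_gt (hHpos u (hIccsub ht hu)))
        · refine ContinuousOn.rpow_const
            ((continuous_const.sub (continuous_const.mul continuous_id)).continuousOn) ?_
          intro u hu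
          exact Or.inl (ne_of_gt (hxpos u hu.2))
      rw [interior_Icc]
      intro u hu
      have huO : u ∈ Set.Ioo T₀ 0 := ⟨lt_trans ht.1 hu.1, hu.2⟩
      have hH := hHpos u (hsub huO)
      have hx := hxpos u hu.2.le
      have hEp := Real.exp_pos (φ u)
      have hd1 : HasDerivAt (fun v => Real.exp (φ v) * H v ^ ((11:ℝ)/4))
          (Real.exp (φ u) * deriv φ u * H u ^ ((11:ℝ)/4) +
           Real.exp (φ u) * (deriv H u * ((11:ℝ)/4) * H u ^ ((11:ℝ)/4 - 1))) u :=
        ((hφd u huO).exp).mul ((hHd u huO).rpow_const (Or.inl (ne_of_gt hH)))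
      have hd2 : HasDerivAt (fun v => (1 - 3 * β ^ 3 * v) ^ (-(mβ β)))
          (-(3 * β ^ 3) * (-(mβ β)) * (1 - 3 * β ^ 3 * u) ^ (-(mβ β) - 1)) u :=
        (hxd u).rpow_const (Or.inl (ne_of_gt hx))
      have hdN := hd1.mul hd2
      simp only [Pi.mul_def] at hdN
      rw [hdN.deriv]
      -- positivity of the bracket
      have hsplitH : H u ^ ((11:ℝ)/4) = H u ^ ((11:ℝ)/4 - 1) * H u := by
        have h' := Real.rpow_add hH ((11:ℝ)/4 - 1) 1
        have h'' : (11:ℝ)/4 - 1 + 1 = (11:ℝ)/4 := by ring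
        rw [h'', Real.rpow_one] at h'
        exact h'
      have hsplitx : (1 - 3 * β ^ 3 * u) ^ (-(mβ β)) =
          (1 - 3 * β ^ 3 * u) ^ (-(mβ β) - 1) * (1 - 3 * β ^ 3 * u) := by
        have h' := Real.rpow_add hx (-(mβ β) - 1) 1
        have h'' : -(mβ β) - 1 + 1 = -(mβ β) := by ring
        rw [h'', Real.rpow_one] at h'
        exact h'
      have hH74 : 0 < H u ^ ((11:ℝ)/4 - 1) := Real.rpow_pos_of_pos hH _
      have hxm1 : 0 < (1 - 3 * β ^ 3 * u) ^ (-(mβ β) - 1) := Real.rpow_pos_of_pos hx _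
      -- inner inequality
      have hd4 := hD4 u huO
      have hψgeu := hψge u huO
      have hPu := hP u huO
      have k0 : β ^ 2 * H u ^ 2 < Real.exp (φ u) * H u ^ 2 * H u ^ 2 := by
        nlinarith [mul_lt_mul_of_pos_right hPu (pow_pos hH 2)]
      have k1 : (-(6 * (Real.exp (φ u) * H u ^ 3)) - Real.sqrt 6 * H u) * H u ≤
          deriv φ u * H u := mul_le_mul_of_nonneg_right hψgeu hH.le
      have inner_gt : deriv φ u * H u + (11/4) * deriv H u >
          ((3/5) * β ^ 2 - (Real.sqrt 6 + 33/4)) * H u ^ 2 := by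
        nlinarith [k0, k1, hd4]
      have hbracket : 0 < (deriv φ u * H u + (11/4) * deriv H u) * (1 - 3 * β ^ 3 * u) +
          3 * β ^ 3 * mβ β * H u := by
        have hHxu := hHxγ u huO
        rcases le_or_gt (Real.sqrt 6 + 33/4) ((3/5) * β ^ 2) with hc | hc
        · have hpos1 : 0 < deriv φ u * H u + (11/4) * deriv H u := by nlinarith [inner_gt, pow_pos hH 2]
          have := mul_pos hpos1 hx
          nlinarith [mul_pos (mul_pos hb3 hmp) hH]
        · have e1 : ((3/5) * β ^ 2 - (Real.sqrt 6 + 33/4)) * H u ^ 2 * (1 - 3 * β ^ 3 * u) ≤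
              (deriv φ u * H u + (11/4) * deriv H u) * (1 - 3 * β ^ 3 * u) :=
            mul_le_mul_of_nonneg_right inner_gt.le hx.le
          have e3 : ((3/5) * β ^ 2 - (Real.sqrt 6 + 33/4)) * gammaβ β <
              ((3/5) * β ^ 2 - (Real.sqrt 6 + 33/4)) * (H u * (1 - 3 * β ^ 3 * u)) := by
            apply mul_lt_mul_of_neg_left hHxu (by linarith)
          have k5 : H u * (((3/5) * β ^ 2 - (Real.sqrt 6 + 33/4)) * gammaβ β) <
              H u * (((3/5) * β ^ 2 - (Real.sqrt 6 + 33/4)) * (H u * (1 - 3 * β ^ 3 * u))) :=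
            mul_lt_mul_of_pos_left e3 hH
          have hkey := key_m_ineq hβ
          have k6 : H u * ((Real.sqrt 6 + 33/4 - (3/5) * β ^ 2) * gammaβ β) ≤
              H u * (3 * mβ β * β ^ 3) := mul_le_mul_of_nonneg_left hkey hH.le
          nlinarith [e1, k5, k6]
      -- assemble positivity
      have expand : (Real.exp (φ u) * deriv φ u * H u ^ ((11:ℝ)/4) +
           Real.exp (φ u) * (deriv H u * ((11:ℝ)/4) * H u ^ ((11:ℝ)/4 - 1))) *
            (1 - 3 * β ^ 3 * u) ^ (-(mβ β)) +
          Real.exp (φ u) * H u ^ ((11:ℝ)/4) *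
            (-(3 * β ^ 3) * (-(mβ β)) * (1 - 3 * β ^ 3 * u) ^ (-(mβ β) - 1)) =
          Real.exp (φ u) * H u ^ ((11:ℝ)/4 - 1) * (1 - 3 * β ^ 3 * u) ^ (-(mβ β) - 1) *
            ((deriv φ u * H u + (11/4) * deriv H u) * (1 - 3 * β ^ 3 * u) +
              3 * β ^ 3 * mβ β * H u) := by
        rw [hsplitH, hsplitx]
        ring
      rw [expand]
      exact mul_pos (mul_pos (mul_pos hEp hH74) hxm1) hbracket
    have hlt := hmono (Set.left_mem_Icc.mpr ht.2.le) (Set.right_mem_Icc.mpr ht.2.le) ht.2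
    simp only [] at hlt
    rw [hφ0, h0, Real.exp_zero, one_mul, mul_zero, sub_zero, Real.one_rpow, mul_one] at hlt
    -- hlt : E H^{11/4} x^{-m} < β^{11/4}
    have hxm : (0:ℝ) < (1 - 3 * β ^ 3 * t) ^ (mβ β) := Real.rpow_pos_of_pos hxt _
    rw [Real.rpow_neg hxt.le, ← div_eq_mul_inv, div_lt_iff₀ hxm] at hlt
    exact hlt
  -- F8 : the lower bound for H
  have hHlow : ∀ t ∈ Set.Ioo T₀ 0,
      H t ^ (-(1/4 : ℝ)) < β ^ (-(1/4 : ℝ)) -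
        β ^ (-(1/4 : ℝ)) / (4 * (mβ β + 1)) * (1 - (1 - 3 * β ^ 3 * t) ^ (mβ β + 1)) := by
    intro t ht
    have hanti : StrictAntiOn (fun u => (β ^ (-(1/4 : ℝ)) -
        β ^ (-(1/4 : ℝ)) / (4 * (mβ β + 1)) * (1 - (1 - 3 * β ^ 3 * u) ^ (mβ β + 1))) -
        H u ^ (-(1/4 : ℝ))) (Set.Icc t 0) := by
      refine strictAntiOn_of_deriv_neg (convex_Icc t 0) ?_ ?_
      · refine ContinuousOn.sub ?_ ?_
        · refine ContinuousOn.sub continuousOn_const ?_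
          refine ContinuousOn.mul continuousOn_const ?_
          refine ContinuousOn.sub continuousOn_const ?_
          refine ContinuousOn.rpow_const
            ((continuous_const.sub (continuous_const.mul continuous_id)).continuousOn) ?_
          intro u hu
          exact Or.inl (ne_of_gt (hxpos u hu.2))
        · refine ContinuousOn.rpow_const (hHc.mono (hIccsub ht)) ?_
          intro u hu
          exact Or.inl (ne_of_gt (hHpos u (hIccsub ht hu)))
      rw [interior_Icc]
      intro u hu
      have huO : u ∈ Set.Ioo T₀ 0 := ⟨lt_trans ht.1 hu.1, hu.2⟩
      have hH := hHpos u (hsub huO)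
      have hx := hxpos u hu.2.le
      have hEp := Real.exp_pos (φ u)
      have hdQ : HasDerivAt (fun u => β ^ (-(1/4 : ℝ)) -
          β ^ (-(1/4 : ℝ)) / (4 * (mβ β + 1)) * (1 - (1 - 3 * β ^ 3 * u) ^ (mβ β + 1)))
          (-(β ^ (-(1/4 : ℝ)) / (4 * (mβ β + 1)) *
            -(-(3 * β ^ 3) * (mβ β + 1) * (1 - 3 * β ^ 3 * u) ^ (mβ β + 1 - 1)))) u := by
        have hin : HasDerivAt (fun v => (1 - 3 * β ^ 3 * v) ^ (mβ β + 1))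
            (-(3 * β ^ 3) * (mβ β + 1) * (1 - 3 * β ^ 3 * u) ^ (mβ β + 1 - 1)) u :=
          (hxd u).rpow_const (Or.inl (ne_of_gt hx))
        exact ((hin.const_sub 1).const_mul _).const_sub _
      have hdq : HasDerivAt (fun v => H v ^ (-(1/4 : ℝ)))
          (deriv H u * (-(1/4 : ℝ)) * H u ^ (-(1/4 : ℝ) - 1)) u :=
        (hHd u huO).rpow_const (Or.inl (ne_of_gt hH))
      have hdG := hdQ.sub hdq
      simp only [Pi.sub_def] at hdG
      rw [hdG.deriv]
      -- show Q' - q' < 0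
      have hm1 : mβ β + 1 - 1 = mβ β := by ring
      rw [hm1]
      have hd3 := hD3 u huO
      have hRu := hRbound u huO
      have hb14 : (0:ℝ) < β ^ (-(1/4 : ℝ)) := Real.rpow_pos_of_pos hβ _
      have hH54 : (0:ℝ) < H u ^ (-(1/4 : ℝ) - 1) := Real.rpow_pos_of_pos hH _
      -- q' = -(1/4) H^{-5/4} D > -(3/4) E H^{11/4} + (1/4) H^{3/4} > -(3/4) β^{11/4} x^m = Q'
      have key1 : deriv H u * (-(1/4 : ℝ)) * H u ^ (-(1/4 : ℝ) - 1) >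
          -(3/4) * (Real.exp (φ u) * H u ^ ((11:ℝ)/4)) := by
        have hsplit : H u ^ ((11:ℝ)/4) = H u ^ (-(1/4 : ℝ) - 1) * H u ^ 4 := by
          rw [show ((11:ℝ)/4) = (-(1/4 : ℝ) - 1) + ((4:ℕ):ℝ) by push_cast; ring,
            Real.rpow_add hH, Real.rpow_natCast]
        have hsplit2 : H u ^ 2 * H u ^ (-(1/4 : ℝ) - 1) > 0 := by positivity
        have hDlt : deriv H u < 3 * H u ^ 4 * Real.exp (φ u) - H u ^ 2 := by linarith
        have e1 : deriv H u * H u ^ (-(1/4 : ℝ) - 1) <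
            (3 * H u ^ 4 * Real.exp (φ u) - H u ^ 2) * H u ^ (-(1/4 : ℝ) - 1) :=
          mul_lt_mul_of_pos_right hDlt hH54
        rw [hsplit]
        nlinarith [e1, hsplit2]
      have key2 : -(3/4) * (Real.exp (φ u) * H u ^ ((11:ℝ)/4)) >
          -(3/4) * (β ^ ((11:ℝ)/4) * (1 - 3 * β ^ 3 * u) ^ (mβ β)) := by
        nlinarith [hRu]
      have keyQ : -(β ^ (-(1/4 : ℝ)) / (4 * (mβ β + 1)) *
            -(-(3 * β ^ 3) * (mβ β + 1) * (1 - 3 * β ^ 3 * u) ^ (mβ β))) =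
          -(3/4) * (β ^ ((11:ℝ)/4) * (1 - 3 * β ^ 3 * u) ^ (mβ β)) := by
        have hb114 : β ^ ((11:ℝ)/4) = β ^ (-(1/4 : ℝ)) * β ^ 3 := by
          rw [show ((11:ℝ)/4) = (-(1/4 : ℝ)) + ((3:ℕ):ℝ) by push_cast; ring,
            Real.rpow_add hβ, Real.rpow_natCast]
        rw [hb114]
        have hm1p : (0:ℝ) < mβ β + 1 := by linarith
        field_simp
      rw [keyQ]
      linarith
    have hlt := hanti (Set.left_mem_Icc.mpr ht.2.le) (Set.right_mem_Icc.mpr ht.2.le) ht.2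
    simp only [] at hlt
    rw [h0, mul_zero, sub_zero, Real.one_rpow, sub_self, mul_zero, sub_zero, sub_self] at hlt
    linarith
  -- F10a : e^φ H³ < β³ x^{4γ/β³}
  have hs6p : (0:ℝ) < Real.sqrt 6 := Real.sqrt_pos.mpr (by norm_num)
  have hBbound : ∀ t ∈ Set.Ioo T₀ 0,
      Real.exp (φ t) * H t ^ 3 <
        β ^ 3 * (1 - 3 * β ^ 3 * t) ^ (4 * gammaβ β / β ^ 3) := by
    intro t ht
    have hxt := hxpos t ht.2.le
    have hmono : StrictMonoOn (fun u => Real.exp (φ u) * H u ^ 3 *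
        (1 - 3 * β ^ 3 * u) ^ (-(4 * gammaβ β / β ^ 3))) (Set.Icc t 0) := by
      refine strictMonoOn_of_deriv_pos (convex_Icc t 0) ?_ ?_
      · refine ContinuousOn.mul (ContinuousOn.mul
          (Real.continuous_exp.comp_continuousOn (hφc.mono (hIccsub ht)))
          ((hHc.mono (hIccsub ht)).pow 3)) ?_
        refine ContinuousOn.rpow_const
          ((continuous_const.sub (continuous_const.mul continuous_id)).continuousOn) ?_
        intro u hu
        exact Or.inl (ne_of_gt (hxpos u hu.2))
      rw [interior_Icc]
      intro u hu
      have huO : u ∈ Set.Ioo T₀ 0 := ⟨lt_trans ht.1 hu.1, hu.2⟩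
      have hH := hHpos u (hsub huO)
      have hx := hxpos u hu.2.le
      have hEp := Real.exp_pos (φ u)
      have hd1 : HasDerivAt (fun v => Real.exp (φ v) * H v ^ 3)
          (Real.exp (φ u) * deriv φ u * H u ^ 3 +
           Real.exp (φ u) * ((3:ℕ) * H u ^ (3-1) * deriv H u)) u :=
        ((hφd u huO).exp).mul ((hHd u huO).pow 3)
      have hd2 : HasDerivAt (fun v => (1 - 3 * β ^ 3 * v) ^ (-(4 * gammaβ β / β ^ 3)))
          (-(3 * β ^ 3) * (-(4 * gammaβ β / β ^ 3)) *
            (1 - 3 * β ^ 3 * u) ^ (-(4 * gammaβ β / β ^ 3) - 1)) u :=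
        (hxd u).rpow_const (Or.inl (ne_of_gt hx))
      have hdN := hd1.mul hd2
      simp only [Pi.mul_def] at hdN
      rw [hdN.deriv]
      have hsplitx : (1 - 3 * β ^ 3 * u) ^ (-(4 * gammaβ β / β ^ 3)) =
          (1 - 3 * β ^ 3 * u) ^ (-(4 * gammaβ β / β ^ 3) - 1) * (1 - 3 * β ^ 3 * u) := by
        have h' := Real.rpow_add hx (-(4 * gammaβ β / β ^ 3) - 1) 1
        have h'' : -(4 * gammaβ β / β ^ 3) - 1 + 1 = -(4 * gammaβ β / β ^ 3) := by ring
        rw [h'', Real.rpow_one] at h'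
        exact h'
      have hxe1 : 0 < (1 - 3 * β ^ 3 * u) ^ (-(4 * gammaβ β / β ^ 3) - 1) :=
        Real.rpow_pos_of_pos hx _
      have he12 : 3 * β ^ 3 * (4 * gammaβ β / β ^ 3) = 12 * gammaβ β := by
        field_simp [ne_of_gt hb3]
        ring
      have hd4 := hD4 u huO
      have hψgeu := hψge u huO
      have hHxu := hHxγ u huO
      have k1 : (-(6 * (Real.exp (φ u) * H u ^ 3)) - Real.sqrt 6 * H u) * H u ≤
          deriv φ u * H u := mul_le_mul_of_nonneg_right hψgeu hH.le
      have hAH : 0 < Real.exp (φ u) * H u ^ 3 * H u := by positivity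
      have inner_gt : deriv φ u * H u + 3 * deriv H u >
          -(9 + Real.sqrt 6) * H u ^ 2 := by
        nlinarith [k1, hd4, hAH]
      have hbracket : 0 < (deriv φ u * H u + 3 * deriv H u) * (1 - 3 * β ^ 3 * u) +
          12 * gammaβ β * H u := by
        have e1 : -(9 + Real.sqrt 6) * H u ^ 2 * (1 - 3 * β ^ 3 * u) ≤
            (deriv φ u * H u + 3 * deriv H u) * (1 - 3 * β ^ 3 * u) :=
          mul_le_mul_of_nonneg_right inner_gt.le hx.le
        have e2 : (9 + Real.sqrt 6) * (H u * (1 - 3 * β ^ 3 * u)) <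
            (9 + Real.sqrt 6) * gammaβ β :=
          mul_lt_mul_of_pos_left hHxu (by positivity)
        have e3 : H u * ((9 + Real.sqrt 6) * (H u * (1 - 3 * β ^ 3 * u))) <
            H u * ((9 + Real.sqrt 6) * gammaβ β) := mul_lt_mul_of_pos_left e2 hH
        have e4 : (9 + Real.sqrt 6) * gammaβ β < 12 * gammaβ β := by
          nlinarith [s6_lt_3, hγp]
        have e5 : H u * ((9 + Real.sqrt 6) * gammaβ β) < H u * (12 * gammaβ β) :=
          mul_lt_mul_of_pos_left e4 hH
        nlinarith [e1, e3, e5]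
      have expand : (Real.exp (φ u) * deriv φ u * H u ^ 3 +
           Real.exp (φ u) * ((3:ℕ) * H u ^ (3-1) * deriv H u)) *
            (1 - 3 * β ^ 3 * u) ^ (-(4 * gammaβ β / β ^ 3)) +
          Real.exp (φ u) * H u ^ 3 *
            (-(3 * β ^ 3) * (-(4 * gammaβ β / β ^ 3)) *
              (1 - 3 * β ^ 3 * u) ^ (-(4 * gammaβ β / β ^ 3) - 1)) =
          Real.exp (φ u) * H u ^ 2 * (1 - 3 * β ^ 3 * u) ^ (-(4 * gammaβ β / β ^ 3) - 1) *
            ((deriv φ u * H u + 3 * deriv H u) * (1 - 3 * β ^ 3 * u) +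
              (3 * β ^ 3 * (4 * gammaβ β / β ^ 3)) * H u) := by
        rw [hsplitx]
        push_cast
        ring
      rw [expand, he12]
      exact mul_pos (mul_pos (by positivity) hxe1) hbracket
    have hlt := hmono (Set.left_mem_Icc.mpr ht.2.le) (Set.right_mem_Icc.mpr ht.2.le) ht.2
    simp only [] at hlt
    rw [hφ0, h0, Real.exp_zero, one_mul, mul_zero, sub_zero, Real.one_rpow, mul_one] at hlt
    have hxm : (0:ℝ) < (1 - 3 * β ^ 3 * t) ^ (4 * gammaβ β / β ^ 3) :=
      Real.rpow_pos_of_pos hxt _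
    rw [Real.rpow_neg hxt.le, ← div_eq_mul_inv, div_lt_iff₀ hxm] at hlt
    exact hlt
  -- F10b : φ upper bound
  have h4γβ : (0:ℝ) < 4 * gammaβ β + β ^ 3 := by positivity
  have hφup : ∀ t ∈ Set.Ioo T₀ 0, φ t <
      Real.sqrt 6 * gammaβ β / (3 * β ^ 3) * Real.log (1 - 3 * β ^ 3 * t) +
        2 * β ^ 3 / (4 * gammaβ β + β ^ 3) *
          ((1 - 3 * β ^ 3 * t) ^ ((4 * gammaβ β + β ^ 3) / β ^ 3) - 1) := by
    intro t ht
    have hanti : StrictAntiOn (fun u =>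
        Real.sqrt 6 * gammaβ β / (3 * β ^ 3) * Real.log (1 - 3 * β ^ 3 * u) +
        2 * β ^ 3 / (4 * gammaβ β + β ^ 3) *
          ((1 - 3 * β ^ 3 * u) ^ ((4 * gammaβ β + β ^ 3) / β ^ 3) - 1) - φ u)
        (Set.Icc t 0) := by
      refine strictAntiOn_of_deriv_neg (convex_Icc t 0) ?_ ?_
      · refine ContinuousOn.sub (ContinuousOn.add ?_ ?_) (hφc.mono (hIccsub ht))
        · refine ContinuousOn.mul continuousOn_const ?_
          refine ContinuousOn.log
            ((continuous_const.sub (continuous_const.mul continuous_id)).continuousOn) ?_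
          intro u hu
          exact ne_of_gt (hxpos u hu.2)
        · refine ContinuousOn.mul continuousOn_const ?_
          refine ContinuousOn.sub ?_ continuousOn_const
          refine ContinuousOn.rpow_const
            ((continuous_const.sub (continuous_const.mul continuous_id)).continuousOn) ?_
          intro u hu
          exact Or.inl (ne_of_gt (hxpos u hu.2))
      rw [interior_Icc]
      intro u hu
      have huO : u ∈ Set.Ioo T₀ 0 := ⟨lt_trans ht.1 hu.1, hu.2⟩
      have hH := hHpos u (hsub huO)
      have hx := hxpos u hu.2.le
      have hd1 : HasDerivAt (fun v : ℝ =>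
          Real.sqrt 6 * gammaβ β / (3 * β ^ 3) * Real.log (1 - 3 * β ^ 3 * v))
          (Real.sqrt 6 * gammaβ β / (3 * β ^ 3) * (-(3 * β ^ 3) / (1 - 3 * β ^ 3 * u))) u :=
        ((hxd u).log (ne_of_gt hx)).const_mul _
      have hd2 : HasDerivAt (fun v : ℝ => 2 * β ^ 3 / (4 * gammaβ β + β ^ 3) *
          ((1 - 3 * β ^ 3 * v) ^ ((4 * gammaβ β + β ^ 3) / β ^ 3) - 1))
          (2 * β ^ 3 / (4 * gammaβ β + β ^ 3) *
            (-(3 * β ^ 3) * ((4 * gammaβ β + β ^ 3) / β ^ 3) *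
              (1 - 3 * β ^ 3 * u) ^ ((4 * gammaβ β + β ^ 3) / β ^ 3 - 1))) u :=
        (((hxd u).rpow_const (Or.inl (ne_of_gt hx))).sub_const 1).const_mul _
      have hdG := (hd1.add hd2).sub (hφd u huO)
      simp only [Pi.sub_def, Pi.add_def] at hdG
      rw [hdG.deriv]
      have hke : (4 * gammaβ β + β ^ 3) / β ^ 3 - 1 = 4 * gammaβ β / β ^ 3 := by
        field_simp [ne_of_gt hb3]
        ring
      rw [hke]
      have c1 : Real.sqrt 6 * gammaβ β / (3 * β ^ 3) * (-(3 * β ^ 3) / (1 - 3 * β ^ 3 * u)) =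
          -(Real.sqrt 6 * gammaβ β / (1 - 3 * β ^ 3 * u)) := by
        field_simp [ne_of_gt hb3]
      have c2 : 2 * β ^ 3 / (4 * gammaβ β + β ^ 3) *
            (-(3 * β ^ 3) * ((4 * gammaβ β + β ^ 3) / β ^ 3) *
              (1 - 3 * β ^ 3 * u) ^ (4 * gammaβ β / β ^ 3)) =
          -(6 * β ^ 3 * (1 - 3 * β ^ 3 * u) ^ (4 * gammaβ β / β ^ 3)) := by
        field_simp [ne_of_gt hb3, ne_of_gt h4γβ]
        ring
      rw [c1, c2]
      have hψgeu := hψge u huO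
      have hBu := hBbound u huO
      have hsH : Real.sqrt 6 * H u < Real.sqrt 6 * (gammaβ β / (1 - 3 * β ^ 3 * u)) :=
        mul_lt_mul_of_pos_left (hHup2 u huO) hs6p
      have hsg : Real.sqrt 6 * (gammaβ β / (1 - 3 * β ^ 3 * u)) =
          Real.sqrt 6 * gammaβ β / (1 - 3 * β ^ 3 * u) := by ring
      nlinarith [hψgeu, hBu, hsH, hsg.le, hsg.ge]
    have hlt := hanti (Set.left_mem_Icc.mpr ht.2.le) (Set.right_mem_Icc.mpr ht.2.le) ht.2
    simp only [] at hlt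
    norm_num [hφ0, Real.one_rpow] at hlt
    linarith [hlt]
  -- Final assembly
  intro t ht
  have hHt := hHpos t (hsub ht)
  refine ⟨?_, ⟨?_, ?_⟩, ?_, ?_⟩
  · -- upper bound
    simp only [Hupper]
    refine lt_min ?_ (hHup2 t ht)
    have hU := hu_gt t ht
    have hUp := hUpos t ht.2.le
    have hUval : Real.exp (6 * gammaβ β * t) *
          (1 / β ^ 2 - 4 * β / (5 * gammaβ β) + 2 * thetaβ β / (15 * gammaβ β ^ 2)) -
        2 * (-6 * β * gammaβ β + thetaβ β + 6 * gammaβ β * thetaβ β * t) /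
          (15 * gammaβ β ^ 2) = Uf t := by rw [hUdef]
    rw [hUval]
    have h2 : H t ^ 2 * Uf t < 1 := by
      have hk := mul_lt_mul_of_pos_left hU (pow_pos hHt 2)
      have hinv : H t ^ 2 * (H t ^ 2)⁻¹ = 1 := mul_inv_cancel₀ (by positivity)
      rw [hinv] at hk
      exact hk
    have hs : 0 < Real.sqrt (Uf t) := Real.sqrt_pos.mpr hUp
    have hss := Real.sq_sqrt hUp.le
    have hlt1 : H t * Real.sqrt (Uf t) < 1 := by
      nlinarith [h2, hss, Real.sqrt_nonneg (Uf t), hHt,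
        sq_nonneg (H t * Real.sqrt (Uf t) - 1)]
    have hfin : H t < (Real.sqrt (Uf t))⁻¹ := by
      rw [← one_div, lt_div_iff₀ hs]
      exact hlt1
    rw [Real.rpow_neg hUp.le, ← Real.sqrt_eq_rpow]
    exact hfin
  · -- lower bound
    simp only [Hlower]
    have hq := hHlow t ht
    have hqpos : 0 < H t ^ (-(1/4 : ℝ)) := Real.rpow_pos_of_pos hHt _
    have h1 : (β ^ (-(1/4 : ℝ)) - β ^ (-(1/4 : ℝ)) / (4 * (mβ β + 1)) *
          (1 - (1 - 3 * β ^ 3 * t) ^ (mβ β + 1))) ^ ((-4 : ℝ)) <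
        (H t ^ (-(1/4 : ℝ))) ^ ((-4 : ℝ)) :=
      Real.rpow_lt_rpow_of_neg hqpos hq (by norm_num)
    have h2 : (H t ^ (-(1/4 : ℝ))) ^ ((-4 : ℝ)) = H t := by
      rw [← Real.rpow_mul hHt.le]
      norm_num
    rw [h2] at h1
    exact h1
  · -- Hlower positive
    simp only [Hlower]
    have hq := hHlow t ht
    have hqpos : 0 < H t ^ (-(1/4 : ℝ)) := Real.rpow_pos_of_pos hHt _
    exact Real.rpow_pos_of_pos (lt_trans hqpos hq) _
  · -- log lower bound for φ
    have hl := hφlow t ht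
    have hxt := hxpos t ht.2.le
    rw [Real.log_pow]
    push_cast
    linarith
  · exact hφup t ht
end

section
/- Let a < 0 and let (H, φ) solve the EdGB FLRW system on (a, 0] with H(0) = β > 0 and φ'(0) < 0. If H'(0) − 3·β^4·exp(φ(0)) + β^2 < 0, then H'(t) − 3·H(t)^4·exp(φ(t)) + H(t)^2 < 0 for all t ∈ (a, 0]. -/
/-- The key algebraic identity at interior points: differentiating the Hamiltonian
constraint and using the scalar field equation and the constraint itself yields
`D₃ · (9e^{2φ}H⁶ + φ'²) = −3H⁴(4 + 9e^{3φ}H⁶)`. -/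
lemma edgb_key (a : ℝ) (H φ : ℝ → ℝ) (hsys : EdGB H φ (Set.Ioc a 0))
    (t : ℝ) (ht : t ∈ Set.Ioo a 0) :
    (deriv H t - 3 * H t ^ 4 * Real.exp (φ t) + H t ^ 2) *
      (9 * Real.exp (φ t) ^ 2 * H t ^ 6 + (deriv φ t) ^ 2) =
    -3 * H t ^ 4 * (4 + 9 * Real.exp (φ t) ^ 3 * H t ^ 6) := by
  obtain ⟨hH1, hφ2, hcon, hsc⟩ := hsys
  have hmem : Set.Ioo a 0 ∈ nhds t := isOpen_Ioo.mem_nhds ht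
  have hHo : ContDiffOn ℝ 1 H (Set.Ioo a 0) := hH1.mono Set.Ioo_subset_Ioc_self
  have hφo : ContDiffOn ℝ 2 φ (Set.Ioo a 0) := hφ2.mono Set.Ioo_subset_Ioc_self
  have hHt : HasDerivAt H (deriv H t) t :=
    ((hHo.contDiffAt hmem).differentiableAt one_ne_zero).hasDerivAt
  have hφt : HasDerivAt φ (deriv φ t) t :=
    ((hφo.contDiffAt hmem).differentiableAt (by norm_num)).hasDerivAt
  have hdφ : ContDiffOn ℝ 1 (deriv φ) (Set.Ioo a 0) :=
    hφo.deriv_of_isOpen isOpen_Ioo (by norm_num)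
  have hφ't : HasDerivAt (deriv φ) (deriv (deriv φ) t) t :=
    ((hdφ.contDiffAt hmem).differentiableAt one_ne_zero).hasDerivAt
  -- derivative of the constraint function
  have hA : HasDerivAt (fun s => 3 * H s ^ 2)
      (3 * ((2 : ℕ) * H t ^ (2 - 1) * deriv H t)) t := (hHt.pow 2).const_mul 3
  have hB : HasDerivAt (fun s => Real.exp (φ s) * deriv φ s)
      (Real.exp (φ t) * deriv φ t * deriv φ t + Real.exp (φ t) * deriv (deriv φ) t) t :=
    hφt.exp.mul hφ't
  have hC : HasDerivAt (fun s => Real.exp (φ s) * deriv φ s * H s ^ 3)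
      ((Real.exp (φ t) * deriv φ t * deriv φ t + Real.exp (φ t) * deriv (deriv φ) t) * H t ^ 3
        + Real.exp (φ t) * deriv φ t * ((3 : ℕ) * H t ^ (3 - 1) * deriv H t)) t :=
    hB.mul (hHt.pow 3)
  have hD : HasDerivAt (fun s => (deriv φ s) ^ 2 / 2)
      ((2 : ℕ) * deriv φ t ^ (2 - 1) * deriv (deriv φ) t / 2) t := (hφ't.pow 2).div_const 2
  have hG : HasDerivAt (fun s =>
      3 * H s ^ 2 - 3 * (Real.exp (φ s) * deriv φ s * H s ^ 3) - (deriv φ s) ^ 2 / 2)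
      (3 * ((2 : ℕ) * H t ^ (2 - 1) * deriv H t)
        - 3 * ((Real.exp (φ t) * deriv φ t * deriv φ t + Real.exp (φ t) * deriv (deriv φ) t)
            * H t ^ 3 + Real.exp (φ t) * deriv φ t * ((3 : ℕ) * H t ^ (3 - 1) * deriv H t))
        - (2 : ℕ) * deriv φ t ^ (2 - 1) * deriv (deriv φ) t / 2) t :=
    (hA.sub (hC.const_mul 3)).sub hD
  have hev : (fun s =>
      3 * H s ^ 2 - 3 * (Real.exp (φ s) * deriv φ s * H s ^ 3) - (deriv φ s) ^ 2 / 2)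
      =ᶠ[nhds t] (fun _ => (0 : ℝ)) := by
    filter_upwards [hmem] with s hs
    have h := hcon s (Set.Ioo_subset_Ioc_self hs)
    ring_nf
    ring_nf at h
    linarith
  have hG0 : HasDerivAt (fun s =>
      3 * H s ^ 2 - 3 * (Real.exp (φ s) * deriv φ s * H s ^ 3) - (deriv φ s) ^ 2 / 2)
      0 t := (hasDerivAt_const t (0 : ℝ)).congr_of_eventuallyEq hev
  have hzero : 3 * ((2 : ℕ) * H t ^ (2 - 1) * deriv H t)
        - 3 * ((Real.exp (φ t) * deriv φ t * deriv φ t + Real.exp (φ t) * deriv (deriv φ) t)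
            * H t ^ 3 + Real.exp (φ t) * deriv φ t * ((3 : ℕ) * H t ^ (3 - 1) * deriv H t))
        - (2 : ℕ) * deriv φ t ^ (2 - 1) * deriv (deriv φ) t / 2 = 0 := hG.unique hG0
  have hsc' := hsc t (Set.Ioo_subset_Ioc_self ht)
  have hcon' := hcon t (Set.Ioo_subset_Ioc_self ht)
  push_cast at hzero
  linear_combination (H t) * hzero
    + (H t * (3 * Real.exp (φ t) * H t ^ 3 + deriv φ t)) * hsc'
    + (4 * H t ^ 2 - 2 * deriv H t) * hcon'

/-- At interior points where `H ≠ 0`, the quantity `D₃` is negative. -/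
lemma edgb_D3_neg (a : ℝ) (H φ : ℝ → ℝ) (hsys : EdGB H φ (Set.Ioc a 0))
    (t : ℝ) (ht : t ∈ Set.Ioo a 0) (hne : H t ≠ 0) :
    deriv H t - 3 * H t ^ 4 * Real.exp (φ t) + H t ^ 2 < 0 := by
  have key := edgb_key a H φ hsys t ht
  have hE : 0 < Real.exp (φ t) := Real.exp_pos _
  have h6 : 0 < H t ^ 6 := by positivity
  have h4 : 0 < H t ^ 4 := by positivity
  have hP : 0 < 9 * Real.exp (φ t) ^ 2 * H t ^ 6 + (deriv φ t) ^ 2 := by positivity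
  have hN : -3 * H t ^ 4 * (4 + 9 * Real.exp (φ t) ^ 3 * H t ^ 6) < 0 := by
    have h44 : 0 < 3 * H t ^ 4 * (4 + 9 * Real.exp (φ t) ^ 3 * H t ^ 6) := by positivity
    linarith
  by_contra hcontra
  push_neg at hcontra
  nlinarith [mul_nonneg hcontra hP.le]

/-- Sign preservation of `D₃ = H' − 3H⁴e^φ + H²` backward in time: if `(H, φ)`
solves the EdGB FLRW system on `(a, 0]` with `H(0) = β > 0`, `φ'(0) < 0` and
`D₃(0) < 0`, then `D₃(t) < 0` for all `t ∈ (a, 0]`. -/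
theorem stmt_15 (a β : ℝ) (ha : a < 0) (H φ : ℝ → ℝ)
    (hsys : EdGB H φ (Set.Ioc a 0))
    (h0 : H 0 = β) (hβ : 0 < β) (hφ'0 : deriv φ 0 < 0)
    (hD30 : deriv H 0 - 3 * β ^ 4 * Real.exp (φ 0) + β ^ 2 < 0) :
    ∀ t ∈ Set.Ioc a 0,
      deriv H t - 3 * H t ^ 4 * Real.exp (φ t) + H t ^ 2 < 0 := by
  have hHcont : ContinuousOn H (Set.Ioc a 0) := hsys.1.continuousOn
  have hH0 : (0 : ℝ) < H 0 := by rw [h0]; exact hβ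
  have h0mem : (0 : ℝ) ∈ Set.Ioc a 0 := ⟨ha, le_refl 0⟩
  -- Step 1: H > 0 on (a, 0]
  have hHpos : ∀ t ∈ Set.Ioc a 0, 0 < H t := by
    by_contra hcontra
    push_neg at hcontra
    obtain ⟨t₀, ht₀, ht₀H⟩ := hcontra
    have ht₀0 : t₀ < 0 := lt_of_le_of_ne ht₀.2 (by rintro rfl; linarith)
    have hIccsub : Set.Icc t₀ 0 ⊆ Set.Ioc a 0 := fun s hs => ⟨lt_of_lt_of_le ht₀.1 hs.1, hs.2⟩
    have hHc : ContinuousOn H (Set.Icc t₀ 0) := hHcont.mono hIccsub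
    -- the set of zeros of H in [t₀, 0]
    set Z := Set.Icc t₀ 0 ∩ H ⁻¹' {0} with hZdef
    have hZne : Z.Nonempty := by
      have : (0 : ℝ) ∈ Set.Icc (H t₀) (H 0) := ⟨ht₀H, hH0.le⟩
      obtain ⟨z, hz, hz0⟩ := intermediate_value_Icc ht₀0.le hHc this
      exact ⟨z, hz, hz0⟩
    have hZclosed : IsClosed Z :=
      hHc.preimage_isClosed_of_isClosed isClosed_Icc isClosed_singleton
    have hZcompact : IsCompact Z :=
      (isCompact_Icc).of_isClosed_subset hZclosed Set.inter_subset_left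
    set ts := sSup Z with hts
    have htsZ : ts ∈ Z := hZcompact.sSup_mem hZne
    have htsH : H ts = 0 := htsZ.2
    have hts0 : ts < 0 := by
      rcases lt_or_eq_of_le htsZ.1.2 with h | h
      · exact h
      · exact absurd (h ▸ htsH) (by rw [h0]; exact hβ.ne')
    have htsa : a < ts := lt_of_lt_of_le ht₀.1 htsZ.1.1
    -- H > 0 on (ts, 0]
    have hpos : ∀ s ∈ Set.Ioc ts 0, 0 < H s := by
      intro s hs
      by_contra hsneg
      push_neg at hsneg
      have hs0 : s < 0 := lt_of_le_of_ne hs.2 (by rintro rfl; linarith)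
      have hsub : Set.Icc s 0 ⊆ Set.Icc t₀ 0 :=
        Set.Icc_subset_Icc (le_trans htsZ.1.1 hs.1.le) le_rfl
      have : (0 : ℝ) ∈ Set.Icc (H s) (H 0) := ⟨hsneg, hH0.le⟩
      obtain ⟨z, hz, hz0⟩ := intermediate_value_Icc hs0.le (hHc.mono hsub) this
      have hzZ : z ∈ Z := ⟨hsub hz, hz0⟩
      have : z ≤ ts := le_csSup hZcompact.bddAbove hzZ
      linarith [hs.1, hz.1]
    -- near ts, 3 e^φ H² < 1, hence H' < 0, hence H decreasing, contradiction
    have htsIoo : ts ∈ Set.Ioo a 0 := ⟨htsa, hts0⟩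
    have hmem : Set.Ioo a 0 ∈ nhds ts := isOpen_Ioo.mem_nhds htsIoo
    have hcts : ContinuousAt (fun s => 3 * Real.exp (φ s) * H s ^ 2) ts := by
      have hφc : ContinuousOn φ (Set.Ioo a 0) :=
        (hsys.2.1.mono Set.Ioo_subset_Ioc_self).continuousOn
      have hHc' : ContinuousOn H (Set.Ioo a 0) := hHcont.mono Set.Ioo_subset_Ioc_self
      have hφca : ContinuousAt φ ts := hφc.continuousAt hmem
      have hHca : ContinuousAt H ts := hHc'.continuousAt hmem
      exact (continuousAt_const.mul hφca.rexp).mul (hHca.pow 2)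
    have hval : (fun s => 3 * Real.exp (φ s) * H s ^ 2) ts < 1 := by
      simp only [htsH]; norm_num
    have hev : ∀ᶠ s in nhds ts, 3 * Real.exp (φ s) * H s ^ 2 < 1 :=
      hcts.eventually_lt_const hval
    obtain ⟨l, u, htlu, hlu⟩ := mem_nhds_iff_exists_Ioo_subset.1 (Filter.inter_mem hev hmem)
    set c := (ts + min u 0) / 2 with hc
    have htsmin : ts < min u 0 := lt_min htlu.2 hts0
    have htc : ts < c := by simp only [hc]; linarith
    have hcu : c < min u 0 := by simp only [hc]; linarith
    have hc0 : c < 0 := lt_of_lt_of_le hcu (min_le_right _ _)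
    have hcint : Set.Icc ts c ⊆ Set.Ioc a 0 := fun s hs =>
      ⟨lt_of_lt_of_le htsa hs.1, le_trans hs.2 hc0.le⟩
    have hanti : StrictAntiOn H (Set.Icc ts c) := by
      apply strictAntiOn_of_deriv_neg (convex_Icc ts c) (hHcont.mono hcint)
      intro s hs
      rw [interior_Icc] at hs
      have hsIoo : s ∈ Set.Ioo a 0 :=
        ⟨lt_trans htsa hs.1, lt_trans hs.2 hc0⟩
      have hsIoc : s ∈ Set.Ioc ts 0 := ⟨hs.1, hsIoo.2.le⟩
      have hHs : 0 < H s := hpos s hsIoc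
      have hD3 := edgb_D3_neg a H φ hsys s hsIoo hHs.ne'
      have hsmall : 3 * Real.exp (φ s) * H s ^ 2 < 1 := by
        have : s ∈ Set.Ioo l u :=
          ⟨lt_trans htlu.1 hs.1, lt_trans hs.2 (lt_of_lt_of_le hcu (min_le_left _ _))⟩
        exact (hlu this).1
      nlinarith [sq_nonneg (H s), pow_pos hHs 2, pow_pos hHs 4]
    have hcpos : 0 < H c := hpos c ⟨htc, hc0.le⟩
    have : H c < H ts := hanti ⟨le_rfl, htc.le⟩ ⟨htc.le, le_rfl⟩ htc
    rw [htsH] at this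
    linarith
  -- Step 2: conclude
  intro t ht
  rcases lt_or_eq_of_le ht.2 with h | h
  · exact edgb_D3_neg a H φ hsys t ⟨ht.1, h⟩ (hHpos t ht).ne'
  · subst h
    rw [h0]
    exact hD30
end

section
/- Let a < 0 and let (H, φ) solve the EdGB FLRW system on (a, 0] with H(0) = β > 0 and φ'(0) < 0. If H'(0) − β^2 + 3·exp(−φ(0)) > 0 and H'(0) − 3·β^4·exp(φ(0)) + β^2 < 0, then H'(t) − H(t)^2 + 3·exp(−φ(t)) > 0 for all t ∈ (a, 0]. -/
open Filter Topology

lemma q18 (v : ℝ) : 0 < 18*v^2 - 12*v + 18 := by nlinarith [sq_nonneg (v - 1), sq_nonneg v]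

lemma qpos (v : ℝ) : 0 < 108*v^4 - 90*v^3 + 153*v^2 - 24*v + 18 := by
  nlinarith [sq_nonneg (v - 1), sq_nonneg (2*v - 1), sq_nonneg (6*v^2 - 3*v), sq_nonneg v]

lemma keyLemma (h x e h' x' : ℝ) (he : 0 < e) (hh : 0 < h) (hx : x < 0)
    (hC : 3*h^2 - 3*e*x*h^3 = x^2/2)
    (hC' : 6*h*h' - 3*(e*x*(x*h^3) + e*(x'*h^3) + e*x*(3*h^2*h')) = x*x')
    (hS : x' = -3*h*x - 3*e*h^2*(h^2 + h')) :
    h' - 3*e*h^4 + h^2 < 0 ∧ 0 < h' - h^2 + 3/e := by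
  have hexh : e*x*h < 0 := by nlinarith [mul_pos (mul_pos he hh) (neg_pos.mpr hx)]
  have hden : 0 < 3*h*(2 - 2*e*x*h + 3*e^2*h^4) := by
    nlinarith [mul_pos (mul_pos he he) (pow_pos hh 4)]
  constructor
  · have hid : (3*h*(2 - 2*e*x*h + 3*e^2*h^4)) * (h' - 3*e*h^4 + h^2)
        = -12*h^3 - 27*e^3*h^9 := by
      linear_combination hC' + (3*e*h^3 + x) * hS + (6*h - 6*e*h^3) * hC
    nlinarith [pow_pos hh 3, mul_pos (pow_pos he 3) (pow_pos hh 9)]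
  · have hid : (3*h*(2 - 2*e*x*h + 3*e^2*h^4)) * (e*h' - e*h^2 + 3)
        = 18*h - 18*e*x*h^2 - 24*e*h^3 + 12*e^2*x*h^4 + 45*e^2*h^5
          - 18*e^3*x*h^6 - 18*e^3*h^7 := by
      linear_combination e*hC' + (e*(3*e*h^3 + x)) * hS + (6*e*h - 6*e^2*h^3) * hC
    have hv : 0 < e*h^2 := by positivity
    have hprod : (e*x*h) * ((e*x*h) + 6*(e*h^2)^2) = 6*(e*h^2)^2 := by
      linear_combination (-2*e^2*h^2) * hC
    have hu6 : (e*x*h) + 6*(e*h^2)^2 < 0 := by nlinarith [hprod, mul_pos hv hv]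
    have hP : 0 < 45*(e*h^2)^2 - 24*(e*h^2) - 18*(e*x*h)*(e*h^2)^2 + 12*(e*x*h)*(e*h^2)
        - 18*(e*h^2)^3 + 18 - 18*(e*x*h) := by
      nlinarith [qpos (e*h^2), mul_pos (show (0:ℝ) < -(e*x*h) - 6*(e*h^2)^2 by linarith)
        (q18 (e*h^2))]
    have hM : 0 < 18*h - 18*e*x*h^2 - 24*e*h^3 + 12*e^2*x*h^4 + 45*e^2*h^5
        - 18*e^3*x*h^6 - 18*e^3*h^7 := by nlinarith [mul_pos hh hP]
    have hpos : 0 < e*h' - e*h^2 + 3 := by nlinarith [hid, hden, hM]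
    have h3 : h' - h^2 + 3/e = (e*h' - e*h^2 + 3)/e := by field_simp
    rw [h3]
    exact div_pos hpos he



/-- Sign preservation of `D₅ = H' − H² + 3e^{−φ}` backward in time: if `(H, φ)`
solves the EdGB FLRW system on `(a, 0]` with `H(0) = β > 0`, `φ'(0) < 0`,
`D₅(0) > 0` and `D₃(0) < 0`, then `D₅(t) > 0` for all `t ∈ (a, 0]`. -/
theorem stmt_17 (a β : ℝ) (ha : a < 0) (H φ : ℝ → ℝ)
    (hsys : EdGB H φ (Set.Ioc a 0))
    (h0 : H 0 = β) (hβ : 0 < β) (hφ'0 : deriv φ 0 < 0)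
    (hD50 : deriv H 0 - β ^ 2 + 3 * Real.exp (-φ 0) > 0)
    (hD30 : deriv H 0 - 3 * β ^ 4 * Real.exp (φ 0) + β ^ 2 < 0) :
    ∀ t ∈ Set.Ioc a 0,
      deriv H t - H t ^ 2 + 3 * Real.exp (-φ t) > 0 := by
  
  obtain ⟨hH, hφ, hcon, hscal⟩ := hsys
  have hsub : Set.Ioo a 0 ⊆ Set.Ioc a 0 := Set.Ioo_subset_Ioc_self
  have hnh : ∀ t ∈ Set.Ioo a 0, Set.Ioc a 0 ∈ 𝓝 t := fun t ht =>
    Filter.mem_of_superset (isOpen_Ioo.mem_nhds ht) hsub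
  -- continuity of H and exp∘φ on I
  have hHc : ContinuousOn H (Set.Ioc a 0) := hH.continuousOn
  -- continuity of deriv φ on I
  have hdiff0 : DifferentiableAt ℝ φ 0 := by
    by_contra hnd
    rw [deriv_zero_of_not_differentiableAt hnd] at hφ'0
    linarith
  have hUD : UniqueDiffOn ℝ (Set.Ioc a 0) := uniqueDiffOn_Ioc a 0
  have h0mem : (0:ℝ) ∈ Set.Ioc a 0 := by constructor <;> simp [ha.le, ha]
  have hxeq : Set.EqOn (deriv φ) (derivWithin φ (Set.Ioc a 0)) (Set.Ioc a 0) := by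
    intro t ht
    rcases eq_or_lt_of_le ht.2 with h | h
    · subst h
      exact (hdiff0.derivWithin (hUD 0 h0mem)).symm
    · exact (derivWithin_of_mem_nhds (hnh t ⟨ht.1, h⟩)).symm
  have hxc : ContinuousOn (deriv φ) (Set.Ioc a 0) :=
    (hφ.continuousOn_derivWithin hUD one_le_two).congr hxeq
  -- φ' vanishes iff H vanishes (from the constraint)
  have hx0 : ∀ t ∈ Set.Ioc a 0, deriv φ t = 0 → H t = 0 := by
    intro t ht hx
    have hc := hcon t ht
    rw [hx] at hc
    nlinarith [sq_nonneg (H t)]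
  have hH0 : ∀ t ∈ Set.Ioc a 0, H t = 0 → deriv φ t = 0 := by
    intro t ht hH0'
    have hc := hcon t ht
    rw [hH0'] at hc
    nlinarith [sq_nonneg (deriv φ t)]
  -- interior pointwise result
  have hinterior : ∀ t ∈ Set.Ioo a 0, 0 < H t → deriv φ t < 0 →
      (deriv H t - 3*Real.exp (φ t)*(H t)^4 + (H t)^2 < 0 ∧
        0 < deriv H t - (H t)^2 + 3/Real.exp (φ t)) := by
    intro t ht hHt hxt
    have hHd : HasDerivAt H (deriv H t) t :=
      (((hH.contDiffAt (hnh t ht)).differentiableAt (by norm_num))).hasDerivAt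
    have hφd : HasDerivAt φ (deriv φ t) t :=
      (((hφ.contDiffAt (hnh t ht)).differentiableAt (by norm_num))).hasDerivAt
    have hφ1 : ContDiffOn ℝ 1 (deriv φ) (Set.Ioo a 0) :=
      ((hφ.mono hsub).deriv_of_isOpen isOpen_Ioo le_rfl)
    have hxd : HasDerivAt (deriv φ) (deriv (deriv φ) t) t :=
      (((hφ1.contDiffAt (isOpen_Ioo.mem_nhds ht)).differentiableAt (by norm_num))).hasDerivAt
    -- differentiate the constraint
    have hF : HasDerivAt (fun u => 3*(H u)^2 - 3*Real.exp (φ u)*deriv φ u*(H u)^3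
        - (deriv φ u)^2/2)
        (3*(2*(H t)^(2-1)*deriv H t)
          - ((Real.exp (φ t)*deriv φ t*deriv φ t + Real.exp (φ t)*deriv (deriv φ) t)*(H t)^3
             + Real.exp (φ t)*deriv φ t*(3*(H t)^(3-1)*deriv H t))*3
          - (2*(deriv φ t)^(2-1)*deriv (deriv φ) t)/2) t := by
      have e1 : HasDerivAt (fun u => 3*(H u)^2) (3*(2*(H t)^(2-1)*deriv H t)) t := by
        simpa using ((hHd.pow 2).const_mul (3:ℝ))
      have e2 : HasDerivAt (fun u => Real.exp (φ u)*deriv φ u)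
          (Real.exp (φ t)*deriv φ t*deriv φ t + Real.exp (φ t)*deriv (deriv φ) t) t :=
        (hφd.exp).mul hxd
      have e3 : HasDerivAt (fun u => Real.exp (φ u)*deriv φ u*(H u)^3)
          ((Real.exp (φ t)*deriv φ t*deriv φ t + Real.exp (φ t)*deriv (deriv φ) t)*(H t)^3
            + Real.exp (φ t)*deriv φ t*(3*(H t)^(3-1)*deriv H t)) t := e2.mul (hHd.pow 3)
      have e4 : HasDerivAt (fun u => 3*(Real.exp (φ u)*deriv φ u*(H u)^3))
          (((Real.exp (φ t)*deriv φ t*deriv φ t + Real.exp (φ t)*deriv (deriv φ) t)*(H t)^3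
            + Real.exp (φ t)*deriv φ t*(3*(H t)^(3-1)*deriv H t))*3) t := by
        simpa [mul_comm] using (e3.const_mul (3:ℝ))
      have e5 : HasDerivAt (fun u => (deriv φ u)^2/2)
          ((2*(deriv φ t)^(2-1)*deriv (deriv φ) t)/2) t := (hxd.pow 2).div_const 2
      have := (e1.sub e4).sub e5
      exact this.congr_of_eventuallyEq (Filter.Eventually.of_forall fun u => by
        simp only [Pi.sub_apply]; ring)
    have hFzero : (fun u => 3*(H u)^2 - 3*Real.exp (φ u)*deriv φ u*(H u)^3
        - (deriv φ u)^2/2) =ᶠ[𝓝 t] (fun _ => (0:ℝ)) := by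
      filter_upwards [isOpen_Ioo.mem_nhds ht] with u hu
      have := hcon u (hsub hu)
      linarith
    have hD0 : (3*(2*(H t)^(2-1)*deriv H t)
          - ((Real.exp (φ t)*deriv φ t*deriv φ t + Real.exp (φ t)*deriv (deriv φ) t)*(H t)^3
             + Real.exp (φ t)*deriv φ t*(3*(H t)^(3-1)*deriv H t))*3
          - (2*(deriv φ t)^(2-1)*deriv (deriv φ) t)/2) = 0 := by
      have h00 : HasDerivAt (fun u => 3*(H u)^2 - 3*Real.exp (φ u)*deriv φ u*(H u)^3
          - (deriv φ u)^2/2) 0 t :=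
        (hasDerivAt_const t (0:ℝ)).congr_of_eventuallyEq hFzero
      exact hF.unique h00
    have hC' : 6*(H t)*(deriv H t)
        - 3*(Real.exp (φ t)*(deriv φ t)*((deriv φ t)*(H t)^3)
            + Real.exp (φ t)*((deriv (deriv φ) t)*(H t)^3)
            + Real.exp (φ t)*(deriv φ t)*(3*(H t)^2*(deriv H t)))
        = (deriv φ t)*(deriv (deriv φ) t) := by
      norm_num at hD0
      linear_combination hD0
    have hCt : 3*(H t)^2 - 3*Real.exp (φ t)*(deriv φ t)*(H t)^3 = (deriv φ t)^2/2 :=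
      hcon t (hsub ht)
    have hSt : deriv (deriv φ) t = -3*(H t)*(deriv φ t)
        - 3*Real.exp (φ t)*(H t)^2*((H t)^2 + deriv H t) := by
      have := hscal t (hsub ht); linarith [this]
    exact keyLemma (H t) (deriv φ t) (Real.exp (φ t)) (deriv H t) (deriv (deriv φ) t)
      (Real.exp_pos _) hHt hxt hCt hC' hSt
  -- H is positive on all of I
  have hHpos : ∀ t ∈ Set.Ioc a 0, 0 < H t := by
    by_contra hcon'
    push_neg at hcon'
    obtain ⟨s, hs, hHs⟩ := hcon'
    have hs0 : s < 0 := by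
      rcases eq_or_lt_of_le hs.2 with h | h
      · exfalso; rw [h, h0] at hHs; linarith
      · exact h
    have hIccsub : Set.Icc s 0 ⊆ Set.Ioc a 0 := fun u hu => ⟨lt_of_lt_of_le hs.1 hu.1, hu.2⟩
    obtain ⟨z, hz, hHz⟩ : ∃ z ∈ Set.Icc s 0, H z = 0 := by
      have := intermediate_value_Icc hs0.le (hHc.mono hIccsub)
      have h0' : (0:ℝ) ∈ Set.Icc (H s) (H 0) := ⟨hHs, by rw [h0]; linarith⟩
      obtain ⟨z, hz, hz0⟩ := this h0'
      exact ⟨z, hz, hz0⟩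
    -- the largest zero of H in [z,0]
    set K : Set ℝ := {u ∈ Set.Icc z 0 | H u = 0} with hK
    have hIcczsub : Set.Icc z 0 ⊆ Set.Ioc a 0 := fun u hu =>
      ⟨lt_of_lt_of_le (lt_of_lt_of_le hs.1 hz.1) hu.1, hu.2⟩
    have hKclosed : IsClosed K := by
      have : K = Set.Icc z 0 ∩ H ⁻¹' {0} := by
        ext u; simp [hK, Set.mem_sep_iff, and_comm]
      rw [this]
      exact (hHc.mono hIcczsub).preimage_isClosed_of_isClosed isClosed_Icc isClosed_singleton
    have hKcomp : IsCompact K := isCompact_Icc.of_isClosed_subset hKclosed fun u hu => hu.1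
    have hKne : K.Nonempty := ⟨z, ⟨⟨le_refl z, hz.2⟩, hHz⟩⟩
    set t₀ := sSup K with ht₀def
    have ht₀K : t₀ ∈ K := hKcomp.sSup_mem hKne
    have ht₀0 : t₀ < 0 := by
      rcases eq_or_lt_of_le ht₀K.1.2 with h | h
      · exfalso; have := ht₀K.2; rw [h, h0] at this; linarith
      · exact h
    have ht₀I : t₀ ∈ Set.Ioc a 0 := hIcczsub ht₀K.1
    have ht₀Ioo : t₀ ∈ Set.Ioo a 0 := ⟨ht₀I.1, ht₀0⟩
    -- H does not vanish on (t₀, 0]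
    have hup : ∀ u ∈ Set.Ioc t₀ (0:ℝ), H u ≠ 0 := by
      intro u hu hHu
      have huK : u ∈ K := ⟨⟨le_trans ht₀K.1.1 hu.1.le, hu.2⟩, hHu⟩
      have := le_csSup (hKcomp.bddAbove) huK
      rw [← ht₀def] at this
      exact absurd hu.1 (not_lt.mpr this)
    have huIoc : ∀ u ∈ Set.Ioc t₀ (0:ℝ), u ∈ Set.Ioc a 0 := fun u hu =>
      ⟨lt_trans ht₀I.1 hu.1, hu.2⟩
    -- H is positive on (t₀, 0]
    have hupos : ∀ u ∈ Set.Ioc t₀ (0:ℝ), 0 < H u := by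
      intro u hu
      rcases lt_trichotomy (H u) 0 with h | h | h
      · exfalso
        have hu0 : u < 0 := by
          rcases eq_or_lt_of_le hu.2 with h' | h'
          · exfalso; rw [h', h0] at h; linarith
          · exact h'
        have hIccusub : Set.Icc u 0 ⊆ Set.Ioc a 0 := fun w hw =>
          ⟨lt_of_lt_of_le (huIoc u hu).1 hw.1, hw.2⟩
        obtain ⟨w, hw, hHw⟩ : ∃ w ∈ Set.Icc u 0, H w = 0 := by
          have := intermediate_value_Icc hu0.le (hHc.mono hIccusub)
          have h0' : (0:ℝ) ∈ Set.Icc (H u) (H 0) := ⟨h.le, by rw [h0]; linarith⟩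
          obtain ⟨w, hw, hw0⟩ := this h0'
          exact ⟨w, hw, hw0⟩
        have hwu : u < w := by
          rcases eq_or_lt_of_le hw.1 with h' | h'
          · exfalso; rw [← h'] at hHw; linarith
          · exact h'
        exact hup w ⟨lt_trans hu.1 hwu, hw.2⟩ hHw
      · exact absurd h (hup u hu)
      · exact h
    -- φ' is negative on (t₀, 0]
    have hxneg : ∀ u ∈ Set.Ioc t₀ (0:ℝ), deriv φ u < 0 := by
      intro u hu
      rcases lt_trichotomy (deriv φ u) 0 with h | h | h
      · exact h
      · exact absurd ((hup u hu) (hx0 u (huIoc u hu) h)) (fun q => q)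
      · exfalso
        have hu0 : u < 0 := by
          rcases eq_or_lt_of_le hu.2 with h' | h'
          · exfalso; rw [h'] at h; linarith
          · exact h'
        have hIccusub : Set.Icc u 0 ⊆ Set.Ioc a 0 := fun w hw =>
          ⟨lt_of_lt_of_le (huIoc u hu).1 hw.1, hw.2⟩
        obtain ⟨w, hw, hxw⟩ : ∃ w ∈ Set.Icc u 0, deriv φ w = 0 := by
          have := intermediate_value_Icc' hu0.le (hxc.mono hIccusub)
          have h0' : (0:ℝ) ∈ Set.Icc (deriv φ 0) (deriv φ u) := ⟨hφ'0.le, h.le⟩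
          obtain ⟨w, hw, hw0⟩ := this h0'
          exact ⟨w, hw, hw0⟩
        have hwI : w ∈ Set.Ioc t₀ (0:ℝ) := ⟨lt_of_lt_of_le hu.1 hw.1, hw.2⟩
        exact hup w hwI (hx0 w (huIoc w hwI) hxw)
    -- find a small interval right of t₀ where 3 e^φ H² < 1
    have hψc : ContinuousAt (fun u => 3*Real.exp (φ u)*(H u)^2) t₀ := by
      apply ContinuousOn.continuousAt _ (hnh t₀ ht₀Ioo)
      exact (continuousOn_const.mul
        (Real.continuous_exp.comp_continuousOn hφ.continuousOn)).mul (hHc.pow 2)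
    have hψ0 : (3*Real.exp (φ t₀)*(H t₀)^2) = 0 := by rw [ht₀K.2]; ring
    have hev : ∀ᶠ u in 𝓝 t₀, 3*Real.exp (φ u)*(H u)^2 < 1 := by
      have : Set.Iio (1:ℝ) ∈ 𝓝 (3*Real.exp (φ t₀)*(H t₀)^2) := by
        rw [hψ0]; exact Iio_mem_nhds one_pos
      exact hψc this
    obtain ⟨ε, hε, hball⟩ := Metric.eventually_nhds_iff.mp hev
    set t₁ := min (t₀ + ε/2) (t₀/2) with ht₁def
    have ht₀t₁ : t₀ < t₁ := by
      apply lt_min (by linarith)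
      linarith
    have ht₁0 : t₁ < 0 := lt_of_le_of_lt (min_le_right _ _) (by linarith)
    have ht₁I : Set.Icc t₀ t₁ ⊆ Set.Ioc a 0 := fun u hu =>
      ⟨lt_of_lt_of_le ht₀I.1 hu.1, le_trans hu.2 ht₁0.le⟩
    have hanti : StrictAntiOn H (Set.Icc t₀ t₁) := by
      apply strictAntiOn_of_deriv_neg (convex_Icc t₀ t₁) (hHc.mono ht₁I)
      intro u hu
      rw [interior_Icc] at hu
      have huIoc' : u ∈ Set.Ioc t₀ (0:ℝ) := ⟨hu.1, le_of_lt (lt_trans hu.2 ht₁0)⟩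
      have huIoo : u ∈ Set.Ioo a 0 := ⟨lt_trans ht₀I.1 hu.1, lt_trans hu.2 ht₁0⟩
      have hD3 := (hinterior u huIoo (hupos u huIoc') (hxneg u huIoc')).1
      have hψu : 3*Real.exp (φ u)*(H u)^2 < 1 := by
        apply hball
        rw [Real.dist_eq, abs_of_pos (by linarith [hu.1] : (0:ℝ) < u - t₀)]
        have := hu.2
        have ht₁le : t₁ ≤ t₀ + ε/2 := min_le_left _ _
        linarith
      nlinarith [pow_pos (hupos u huIoc') 2, Real.exp_pos (φ u)]
    have hlt : H t₁ < H t₀ :=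
      hanti (Set.left_mem_Icc.mpr ht₀t₁.le) (Set.right_mem_Icc.mpr ht₀t₁.le) ht₀t₁
    have := hupos t₁ ⟨ht₀t₁, ht₁0.le⟩
    rw [ht₀K.2] at hlt
    linarith
  -- φ' is negative on all of I
  have hxnegI : ∀ t ∈ Set.Ioc a 0, deriv φ t < 0 := by
    intro t ht
    rcases lt_trichotomy (deriv φ t) 0 with h | h | h
    · exact h
    · exact absurd (hHpos t ht) (by rw [hx0 t ht h]; exact lt_irrefl 0)
    · exfalso
      have ht0 : t < 0 := by
        rcases eq_or_lt_of_le ht.2 with h' | h'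
        · exfalso; rw [h'] at h; linarith
        · exact h'
      have hIccsub : Set.Icc t 0 ⊆ Set.Ioc a 0 := fun w hw => ⟨lt_of_lt_of_le ht.1 hw.1, hw.2⟩
      obtain ⟨w, hw, hxw⟩ : ∃ w ∈ Set.Icc t 0, deriv φ w = 0 := by
        have := intermediate_value_Icc' ht0.le (hxc.mono hIccsub)
        have h0' : (0:ℝ) ∈ Set.Icc (deriv φ 0) (deriv φ t) := ⟨hφ'0.le, h.le⟩
        obtain ⟨w, hw, hw0⟩ := this h0'
        exact ⟨w, hw, hw0⟩
      have := hHpos w (hIccsub hw)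
      rw [hx0 w (hIccsub hw) hxw] at this
      exact lt_irrefl 0 this
  -- conclude
  intro t ht
  rcases eq_or_lt_of_le ht.2 with h | h
  · subst h
    rw [h0]
    exact hD50
  · have hD5 := (hinterior t ⟨ht.1, h⟩ (hHpos t ht) (hxnegI t ht)).2
    rw [Real.exp_neg]
    rw [div_eq_mul_inv] at hD5
    linarith
end
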